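/- arXiv:1309.5522 — 4 statements merged into one kernel-verified Lean document; each statement's English description precedes it below -/
import Mathlib

section
/- If three forward zones of a history overlap at a common point in time, then the history is not 2-atomic. -/
open scoped Classical

/-- An operation on a single register. -/
structure Op where
  s : ℝ
  f : ℝ
  isRead : Bool
  val : ℕ

abbrev History := Finset Op

def Op.isWrite (op : Op) : Prop := op.isRead = false

/-- Well-formedness of a history: operations have positive duration, all endpoints
are distinct, writes have distinct values, and every read has a dictating write
that finishes before the read starts. -/
def Wf (H : History) : Prop :=
  (∀ op ∈ H, op.s < op.f) ∧
  (∀ op1 ∈ H, ∀ op2 ∈ H, op1 ≠ op2 →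
    op1.s ≠ op2.s ∧ op1.f ≠ op2.f ∧ op1.s ≠ op2.f) ∧
  (∀ w1 ∈ H, ∀ w2 ∈ H, w1.isWrite → w2.isWrite → w1.val = w2.val → w1 = w2) ∧
  (∀ r ∈ H, r.isRead = true → ∃ w ∈ H, w.isWrite ∧ w.val = r.val ∧ w.f < r.s)

/-- `a` occurs before `b` in the total order represented by the list `l`. -/
def Before (l : List Op) (a b : Op) : Prop :=
  ∃ l1 l2 l3, l = l1 ++ a :: l2 ++ b :: l3

/-- A total order (list) is valid if it respects real-time precedence. -/
def Valid (l : List Op) : Prop :=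
  ∀ a ∈ l, ∀ b ∈ l, a.f < b.s → Before l a b

/-- `l` is a total order on exactly the operations of `H`. -/
def IsLinearization (H : History) (l : List Op) : Prop :=
  l.Nodup ∧ ∀ op, op ∈ l ↔ op ∈ H

/-- In the total order `l`, every read follows its dictating write, separated from
it by at most `k - 1` other writes. -/
def KAtomicOrder (k : ℕ) (l : List Op) : Prop :=
  ∀ r ∈ l, r.isRead = true → ∀ w ∈ l, w.isWrite → w.val = r.val →
    ∃ l1 l2 l3, l = l1 ++ w :: l2 ++ r :: l3 ∧
      (l2.filter (fun op => op.isRead = false)).length ≤ k - 1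

/-- A history is `k`-atomic if it has a valid `k`-atomic total order. -/
def KAtomic (k : ℕ) (H : History) : Prop :=
  ∃ l, IsLinearization H l ∧ Valid l ∧ KAtomicOrder k l

/-- The cluster of a write `w`: the write together with its dictated reads. -/
noncomputable def cluster (H : History) (w : Op) : Finset Op :=
  insert w (H.filter (fun r => r.isRead = true ∧ r.val = w.val))

/-- Minimum finish time over the cluster of `w`. -/
noncomputable def fmin (H : History) (w : Op) : ℝ :=
  (cluster H w).inf' (Finset.insert_nonempty _ _) Op.f

/-- Maximum start time over the cluster of `w`. -/
noncomputable def smax (H : History) (w : Op) : ℝ :=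
  (cluster H w).sup' (Finset.insert_nonempty _ _) Op.s

/-- The zone of `w`'s cluster is forward if its minimum finish time is less than
its maximum start time. -/
def ForwardZone (H : History) (w : Op) : Prop := fmin H w < smax H w

/-- Low endpoint of the zone of `w`'s cluster. -/
noncomputable def zoneL (H : History) (w : Op) : ℝ := min (fmin H w) (smax H w)

/-- High endpoint of the zone of `w`'s cluster. -/
noncomputable def zoneH (H : History) (w : Op) : ℝ := max (fmin H w) (smax H w)

/-- The zone of `w`'s cluster, as a closed interval of time. -/
noncomputable def zone (H : History) (w : Op) : Set ℝ := Set.Icc (zoneL H w) (zoneH H w)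


section IndexHelpers
set_option linter.unusedSectionVars false
variable {α : Type*} [DecidableEq α]

lemma nodup_facts {l1 l2 l3 : List α} {a b : α}
    (hn : (l1 ++ a :: l2 ++ b :: l3).Nodup) :
    a ∉ l1 ∧ b ∉ l1 ∧ a ≠ b ∧ b ∉ l2 ∧ (∀ x ∈ l3, x ∉ l1 ∧ x ≠ a ∧ x ∉ l2 ∧ x ≠ b) := by
  simp only [List.nodup_append, List.nodup_cons, List.mem_append, List.mem_cons,
    List.disjoint_cons_right, List.disjoint_cons_left, List.Disjoint] at hn
  refine ⟨fun hm => hn.1.2.2 a hm a (Or.inl rfl) rfl,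
    fun hm => hn.2.2 b (Or.inl hm) b (Or.inl rfl) rfl,
    fun h => hn.2.2 a (Or.inr (Or.inl rfl)) b (Or.inl rfl) h,
    fun hm => hn.2.2 b (Or.inr (Or.inr hm)) b (Or.inl rfl) rfl,
    fun x hx => ⟨fun hm => hn.2.2 x (Or.inl hm) x (Or.inr hx) rfl,
      fun h => hn.2.2 a (Or.inr (Or.inl rfl)) x (Or.inr hx) h.symm,
      fun hm => hn.2.2 x (Or.inr (Or.inr hm)) x (Or.inr hx) rfl,
      fun h => hn.2.1.1 (h ▸ hx)⟩⟩

lemma idx_a {l1 l2 l3 : List α} {a b : α}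
    (hn : (l1 ++ a :: l2 ++ b :: l3).Nodup) :
    (l1 ++ a :: l2 ++ b :: l3).idxOf a = l1.length := by
  obtain ⟨h1, h2, h3, h4, h5⟩ := nodup_facts hn
  simp only [List.append_assoc, List.cons_append]
  rw [List.idxOf_append_of_notMem h1, List.idxOf_cons_self]
  omega

lemma idx_b {l1 l2 l3 : List α} {a b : α}
    (hn : (l1 ++ a :: l2 ++ b :: l3).Nodup) :
    (l1 ++ a :: l2 ++ b :: l3).idxOf b = l1.length + l2.length + 1 := by
  obtain ⟨h1, h2, h3, h4, h5⟩ := nodup_facts hn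
  simp only [List.append_assoc, List.cons_append]
  rw [List.idxOf_append_of_notMem h2, List.idxOf_cons_ne _ h3,
    List.idxOf_append_of_notMem h4, List.idxOf_cons_self]
  omega

lemma idx_lt {l1 l2 l3 : List α} {a b : α}
    (hn : (l1 ++ a :: l2 ++ b :: l3).Nodup) :
    (l1 ++ a :: l2 ++ b :: l3).idxOf a < (l1 ++ a :: l2 ++ b :: l3).idxOf b := by
  rw [idx_a hn, idx_b hn]; omega

lemma mem_mid {l1 l2 l3 : List α} {a b x : α}
    (hn : (l1 ++ a :: l2 ++ b :: l3).Nodup)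
    (hx : x ∈ l1 ++ a :: l2 ++ b :: l3)
    (hax : (l1 ++ a :: l2 ++ b :: l3).idxOf a < (l1 ++ a :: l2 ++ b :: l3).idxOf x)
    (hxb : (l1 ++ a :: l2 ++ b :: l3).idxOf x < (l1 ++ a :: l2 ++ b :: l3).idxOf b) :
    x ∈ l2 := by
  obtain ⟨h1, h2, h3, h4, h5⟩ := nodup_facts hn
  rw [idx_a hn] at hax
  rw [idx_b hn] at hxb
  simp only [List.append_assoc, List.cons_append] at hax hxb hx
  simp only [List.mem_append, List.mem_cons] at hx
  rcases hx with hx | hx | hx | hx | hx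
  · rw [List.idxOf_append_of_mem hx] at hax
    have := List.idxOf_lt_length_iff.2 hx
    omega
  · subst hx
    rw [List.idxOf_append_of_notMem h1, List.idxOf_cons_self] at hax; omega
  · exact hx
  · subst hx
    rw [List.idxOf_append_of_notMem h2, List.idxOf_cons_ne _ h3,
      List.idxOf_append_of_notMem h4, List.idxOf_cons_self] at hxb; omega
  · obtain ⟨g1, g2, g3, g4⟩ := h5 x hx
    rw [List.idxOf_append_of_notMem g1, List.idxOf_cons_ne _ (Ne.symm g2),
      List.idxOf_append_of_notMem g3, List.idxOf_cons_ne _ (Ne.symm g4)] at hxb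
    omega

end IndexHelpers


lemma two_le_length {α : Type*} {L : List α} {x y : α} (hx : x ∈ L) (hy : y ∈ L)
    (hxy : x ≠ y) : 2 ≤ L.length := by
  match L with
  | [] => simp at hx
  | [z] =>
    simp only [List.mem_singleton] at hx hy
    exact absurd (hx.trans hy.symm) hxy
  | _ :: _ :: _ => simp only [List.length_cons]; omega

lemma setup_zone (H : History) (hWf : Wf H) (w : Op) (hw : w ∈ H) (hww : w.isWrite)
    (hfz : ForwardZone H w) (t : ℝ) (ht : t ∈ zone H w) :
    ∃ a b, a ∈ H ∧ b ∈ H ∧ a.f ≤ t ∧ t ≤ b.s ∧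
      (a = w ∨ (a.isRead = true ∧ a.val = w.val)) ∧ b.isRead = true ∧ b.val = w.val := by
  have hL : zoneL H w = fmin H w := min_eq_left hfz.le
  have hH : zoneH H w = smax H w := max_eq_right hfz.le
  rw [zone, hL, hH, Set.mem_Icc] at ht
  obtain ⟨a, ha, haf⟩ := Finset.exists_mem_eq_inf' (s := cluster H w)
    (Finset.insert_nonempty _ _) Op.f
  obtain ⟨b, hb, hbs⟩ := Finset.exists_mem_eq_sup' (s := cluster H w)
    (Finset.insert_nonempty _ _) Op.s
  have haf' : fmin H w = a.f := haf
  have hbs' : smax H w = b.s := hbs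
  have hmem : ∀ x ∈ cluster H w, x ∈ H ∧ (x = w ∨ (x.isRead = true ∧ x.val = w.val)) := by
    intro x hx
    rw [cluster, Finset.mem_insert] at hx
    rcases hx with rfl | hx
    · exact ⟨hw, Or.inl rfl⟩
    · rw [Finset.mem_filter] at hx
      exact ⟨hx.1, Or.inr hx.2⟩
  obtain ⟨haH, haw⟩ := hmem a ha
  obtain ⟨hbH, hbw⟩ := hmem b hb
  have hbne : b ≠ w := by
    intro hbw_eq
    have hfz' : a.f < b.s := haf' ▸ hbs' ▸ hfz
    have hane : a ≠ w := by
      intro haw_eq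
      have h2 := hWf.1 w hw
      rw [haw_eq, hbw_eq] at hfz'
      linarith
    have har : a.isRead = true ∧ a.val = w.val := haw.resolve_left hane
    obtain ⟨w', hw'H, hw'w, hw'v, hw'lt⟩ := hWf.2.2.2 a haH har.1
    have hw'eq : w' = w := hWf.2.2.1 w' hw'H w hw hw'w hww (hw'v.trans har.2)
    rw [hw'eq] at hw'lt
    have has_le : a.s ≤ smax H w := Finset.le_sup' Op.s ha
    rw [hbs', hbw_eq] at has_le
    have h2 := hWf.1 w hw
    linarith
  have hbr : b.isRead = true ∧ b.val = w.val := hbw.resolve_left hbne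
  exact ⟨a, b, haH, hbH, haf' ▸ ht.1, hbs' ▸ ht.2, haw, hbr.1, hbr.2⟩

/-- If three forward zones of a history overlap at a common point in time, then
the history is not 2-atomic. -/
theorem stmt_0 (H : History) (hWf : Wf H)
    (w1 w2 w3 : Op) (h1 : w1 ∈ H) (h2 : w2 ∈ H) (h3 : w3 ∈ H)
    (hw1 : w1.isWrite) (hw2 : w2.isWrite) (hw3 : w3.isWrite)
    (h12 : w1 ≠ w2) (h13 : w1 ≠ w3) (h23 : w2 ≠ w3)
    (hf1 : ForwardZone H w1) (hf2 : ForwardZone H w2) (hf3 : ForwardZone H w3)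
    (t : ℝ) (ht1 : t ∈ zone H w1) (ht2 : t ∈ zone H w2) (ht3 : t ∈ zone H w3) :
    ¬ KAtomic 2 H := by
-- main proof
  intro hK
  obtain ⟨l, ⟨hnd, hmem⟩, hval, hka⟩ := hK
  obtain ⟨a1, b1, ha1H, hb1H, ha1f, hb1s, ha1w, hb1r, hb1v⟩ :=
    setup_zone H hWf w1 h1 hw1 hf1 t ht1
  obtain ⟨a2, b2, ha2H, hb2H, ha2f, hb2s, ha2w, hb2r, hb2v⟩ :=
    setup_zone H hWf w2 h2 hw2 hf2 t ht2
  obtain ⟨a3, b3, ha3H, hb3H, ha3f, hb3s, ha3w, hb3r, hb3v⟩ :=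
    setup_zone H hWf w3 h3 hw3 hf3 t ht3
  have posle : ∀ w a : Op, w ∈ H → a ∈ H →
      (a = w ∨ (a.isRead = true ∧ a.val = w.val)) → w.isWrite →
      l.idxOf w ≤ l.idxOf a := by
    rintro w a hw ha (rfl | ⟨hr, hv⟩) hww
    · exact le_refl _
    · obtain ⟨p1, p2, p3, hdec, -⟩ :=
        hka a ((hmem a).2 ha) hr w ((hmem w).2 hw) hww hv.symm
      rw [hdec] at hnd ⊢
      exact (idx_lt hnd).le
  have cross : ∀ a b : Op, a ∈ H → b ∈ H → a.f ≤ t → t ≤ b.s →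
      l.idxOf a < l.idxOf b := by
    intro a b ha hb hf hs
    have hne : a ≠ b := by
      rintro rfl
      have := hWf.1 a ha
      linarith
    have hlt : a.f < b.s :=
      lt_of_le_of_ne (hf.trans hs)
        (fun h => (hWf.2.1 b hb a ha hne.symm).2.2 h.symm)
    obtain ⟨p1, p2, p3, hdec⟩ := hval a ((hmem a).2 ha) b ((hmem b).2 hb) hlt
    rw [hdec] at hnd ⊢
    exact idx_lt hnd
  have hwb : ∀ w a b : Op, w ∈ H → a ∈ H → b ∈ H →
      (a = w ∨ (a.isRead = true ∧ a.val = w.val)) → w.isWrite → a.f ≤ t → t ≤ b.s →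
      l.idxOf w < l.idxOf b :=
    fun w a b hw ha hb haw hww hf hs =>
      lt_of_le_of_lt (posle w a hw ha haw hww) (cross a b ha hb hf hs)
  have key : ∀ wi wj wk bi : Op, wi ∈ H → wj ∈ H → wk ∈ H → bi ∈ H →
      wi.isWrite → wj.isWrite → wk.isWrite → wj ≠ wk →
      bi.isRead = true → bi.val = wi.val →
      l.idxOf wi < l.idxOf wj → l.idxOf wi < l.idxOf wk →
      l.idxOf wj < l.idxOf bi → l.idxOf wk < l.idxOf bi → False := by
    intro wi wj wk bi hiH hjH hkH hbH hwi hwj hwk hjk hbr hbv hij hik hjb hkb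
    obtain ⟨p1, p2, p3, hdec, hlen⟩ :=
      hka bi ((hmem bi).2 hbH) hbr wi ((hmem wi).2 hiH) hwi hbv.symm
    have hjl : wj ∈ l := (hmem wj).2 hjH
    have hkl : wk ∈ l := (hmem wk).2 hkH
    rw [hdec] at hnd hij hik hjb hkb hjl hkl
    have hj2 : wj ∈ p2 := mem_mid hnd hjl hij hjb
    have hk2 : wk ∈ p2 := mem_mid hnd hkl hik hkb
    have hwj' : wj.isRead = false := hwj
    have hwk' : wk.isRead = false := hwk
    have hjf : wj ∈ p2.filter (fun op => op.isRead = false) :=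
      List.mem_filter.2 ⟨hj2, by simp [hwj']⟩
    have hkf : wk ∈ p2.filter (fun op => op.isRead = false) :=
      List.mem_filter.2 ⟨hk2, by simp [hwk']⟩
    have := two_le_length hjf hkf hjk
    omega
  have hne_idx : ∀ wa wb : Op, wa ∈ H → wb ∈ H → wa ≠ wb →
      l.idxOf wa ≠ l.idxOf wb := by
    intro wa wb hwa hwb hab h
    exact hab ((List.idxOf_inj ((hmem wa).2 hwa)).1 h)
  have d12 := hne_idx w1 w2 h1 h2 h12
  have d13 := hne_idx w1 w3 h1 h3 h13
  have d23 := hne_idx w2 w3 h2 h3 h23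
  rcases Ne.lt_or_gt d12 with h | h
  · rcases Ne.lt_or_gt d13 with h' | h'
    · exact key w1 w2 w3 b1 h1 h2 h3 hb1H hw1 hw2 hw3 h23 hb1r hb1v h h'
        (hwb w2 a2 b1 h2 ha2H hb1H ha2w hw2 ha2f hb1s)
        (hwb w3 a3 b1 h3 ha3H hb1H ha3w hw3 ha3f hb1s)
    · exact key w3 w1 w2 b3 h3 h1 h2 hb3H hw3 hw1 hw2 h12 hb3r hb3v h' (h'.trans h)
        (hwb w1 a1 b3 h1 ha1H hb3H ha1w hw1 ha1f hb3s)
        (hwb w2 a2 b3 h2 ha2H hb3H ha2w hw2 ha2f hb3s)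
  · rcases Ne.lt_or_gt d23 with h' | h'
    · exact key w2 w1 w3 b2 h2 h1 h3 hb2H hw2 hw1 hw3 h13 hb2r hb2v h h'
        (hwb w1 a1 b2 h1 ha1H hb2H ha1w hw1 ha1f hb2s)
        (hwb w3 a3 b2 h3 ha3H hb2H ha3w hw3 ha3f hb2s)
    · exact key w3 w1 w2 b3 h3 h1 h2 hb3H hw3 hw1 hw2 h12 hb3r hb3v (h'.trans h) h'
        (hwb w1 a1 b3 h1 ha1H hb3H ha1w hw1 ha1f hb3s)
        (hwb w2 a2 b3 h2 ha2H hb3H ha2w hw2 ha2f hb3s)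
end

section
/- If a history contains a forward zone that contains the low endpoints of three other forward zones, then the history is not 2-atomic. -/
open scoped Classical

section Aux

lemma indexOf_append_left {α : Type} [DecidableEq α] {x : α} {m t : List α} (h : x ∈ m) :
    List.idxOf x (m ++ t) = List.idxOf x m := by
  induction m with
  | nil => simp at h
  | cons y ys ih =>
    by_cases hxy : y = x
    · subst hxy; simp [List.idxOf_cons_self]
    · have hx : x ∈ ys := by
        rcases List.mem_cons.mp h with h' | h'
        · exact absurd h'.symm hxy
        · exact h'
      rw [List.cons_append, List.idxOf_cons_ne _ hxy, List.idxOf_cons_ne _ hxy, ih hx]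

lemma nm_facts {m1 m2 m3 : List Op} {a b : Op}
    (hl : (m1 ++ a :: m2 ++ b :: m3).Nodup) :
    a ∉ m1 ∧ b ∉ m1 ∧ b ≠ a ∧ b ∉ m2 := by
  rw [show m1 ++ a :: m2 ++ b :: m3 = m1 ++ (a :: (m2 ++ b :: m3)) by simp] at hl
  rw [List.nodup_append] at hl
  obtain ⟨-, h2, hdisj⟩ := hl
  rw [List.nodup_cons, List.nodup_append] at h2
  obtain ⟨hna, -, -, hdisj2⟩ := h2
  refine ⟨fun h => hdisj _ h _ (by simp) rfl, fun h => hdisj _ h _ (by simp) rfl, ?_, ?_⟩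
  · intro h; subst h; exact hna (by simp)
  · intro h; exact hdisj2 _ h _ (by simp) rfl

lemma nm_facts3 {m1 m2 m3 : List Op} {a b x : Op}
    (hl : (m1 ++ a :: m2 ++ b :: m3).Nodup) (hx : x ∈ m3) :
    x ∉ m1 ∧ x ≠ a ∧ x ∉ m2 ∧ x ≠ b := by
  rw [show m1 ++ a :: m2 ++ b :: m3 = m1 ++ (a :: (m2 ++ b :: m3)) by simp,
    List.nodup_append] at hl
  obtain ⟨-, h2, hdisj⟩ := hl
  rw [List.nodup_cons, List.nodup_append] at h2
  obtain ⟨hna, -, h3, hdisj2⟩ := h2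
  rw [List.nodup_cons] at h3
  exact ⟨fun h => hdisj _ h _ (by simp [hx]) rfl, fun h => hna (by subst h; simp [hx]),
    fun h => hdisj2 _ h _ (by simp [hx]) rfl, fun h => h3.1 (h ▸ hx)⟩

lemma idx_decomp {l m1 m2 m3 : List Op} {a b : Op} (hl : l.Nodup)
    (h : l = m1 ++ a :: m2 ++ b :: m3) :
    List.idxOf a l = m1.length ∧ List.idxOf b l = m1.length + 1 + m2.length := by
  subst h
  obtain ⟨ha1, hb1, hba, hb2⟩ := nm_facts hl
  constructor
  · rw [show m1 ++ a :: m2 ++ b :: m3 = m1 ++ (a :: (m2 ++ b :: m3)) by simp,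
      List.idxOf_append_of_notMem ha1, List.idxOf_cons_self]; omega
  · rw [show m1 ++ a :: m2 ++ b :: m3 = m1 ++ (a :: (m2 ++ b :: m3)) by simp,
      List.idxOf_append_of_notMem hb1, List.idxOf_cons_ne _ (Ne.symm hba),
      List.idxOf_append_of_notMem hb2, List.idxOf_cons_self]
    omega

lemma mem_mid_s1 {l m1 m2 m3 : List Op} {a b x : Op} (hl : l.Nodup)
    (h : l = m1 ++ a :: m2 ++ b :: m3) (hx : x ∈ l)
    (h1 : List.idxOf a l < List.idxOf x l) (h2 : List.idxOf x l < List.idxOf b l) :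
    x ∈ m2 := by
  obtain ⟨hia, hib⟩ := idx_decomp hl h
  subst h
  have hmem : x ∈ m1 ∨ x = a ∨ x ∈ m2 ∨ x = b ∨ x ∈ m3 := by
    simpa using hx
  rcases hmem with hm | rfl | hm | rfl | hm
  · have he : List.idxOf x (m1 ++ a :: m2 ++ b :: m3) = List.idxOf x m1 := by
      rw [show m1 ++ a :: m2 ++ b :: m3 = m1 ++ (a :: (m2 ++ b :: m3)) by simp]
      exact indexOf_append_left hm
    have h3 : List.idxOf x m1 < m1.length := List.idxOf_lt_length_iff.mpr hm
    omega
  · omega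
  · exact hm
  · omega
  · obtain ⟨hx1, hxa, hx2, hxb⟩ := nm_facts3 hl hm
    have he : List.idxOf x (m1 ++ a :: m2 ++ b :: m3)
        = m1.length + (m2.length + (List.idxOf x m3).succ).succ := by
      rw [show m1 ++ a :: m2 ++ b :: m3 = m1 ++ (a :: (m2 ++ b :: m3)) by simp,
        List.idxOf_append_of_notMem hx1, List.idxOf_cons_ne _ (Ne.symm hxa),
        List.idxOf_append_of_notMem hx2, List.idxOf_cons_ne _ (Ne.symm hxb)]
    omega

lemma two_writes {m2 : List Op} {x y : Op}
    (h : (m2.filter (fun op => op.isRead = false)).length ≤ 1)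
    (hx : x ∈ m2) (hy : y ∈ m2) (hxy : x ≠ y) (hwx : x.isWrite) (hwy : y.isWrite) : False := by
  have hwx' : x.isRead = false := hwx
  have hwy' : y.isRead = false := hwy
  have hx' : x ∈ m2.filter (fun op => op.isRead = false) :=
    List.mem_filter.mpr ⟨hx, by simp [hwx']⟩
  have hy' : y ∈ m2.filter (fun op => op.isRead = false) :=
    List.mem_filter.mpr ⟨hy, by simp [hwy']⟩
  have hcard : 1 < (m2.filter (fun op => op.isRead = false)).toFinset.card :=
    Finset.one_lt_card.mpr ⟨x, List.mem_toFinset.mpr hx', y, List.mem_toFinset.mpr hy', hxy⟩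
  have hle := List.toFinset_card_le (m2.filter (fun op => op.isRead = false))
  omega

lemma mem_cluster_iff {H : History} {w x : Op} :
    x ∈ cluster H w ↔ x = w ∨ (x ∈ H ∧ x.isRead = true ∧ x.val = w.val) := by
  simp [cluster]

lemma cluster_subset {H : History} {w x : Op} (hw : w ∈ H) (hx : x ∈ cluster H w) : x ∈ H := by
  rcases mem_cluster_iff.mp hx with rfl | ⟨h, -, -⟩
  · exact hw
  · exact h

lemma cluster_disjoint {H : History} {wa wb x : Op} (hWf : Wf H) (hwa : wa ∈ H) (hwb : wb ∈ H)
    (hWa : wa.isWrite) (hWb : wb.isWrite) (hne : wa ≠ wb)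
    (hx1 : x ∈ cluster H wa) (hx2 : x ∈ cluster H wb) : False := by
  have hWa' : wa.isRead = false := hWa
  have hWb' : wb.isRead = false := hWb
  rcases mem_cluster_iff.mp hx1 with rfl | ⟨hH1, hR1, hV1⟩
  · rcases mem_cluster_iff.mp hx2 with h | ⟨hH2, hR2, hV2⟩
    · exact hne h
    · simp [hWa'] at hR2
  · rcases mem_cluster_iff.mp hx2 with rfl | ⟨hH2, hR2, hV2⟩
    · simp [hWb'] at hR1
    · exact hne (hWf.2.2.1 wa hwa wb hwb hWa hWb (hV1.symm.trans hV2))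

lemma zone_ops {H : History} {w : Op} (hWf : Wf H) (hw : w ∈ H) (hwW : w.isWrite)
    (hf : ForwardZone H w) :
    ∃ a b, a ∈ cluster H w ∧ b ∈ cluster H w ∧ a.f = fmin H w ∧ b.s = smax H w ∧
      b.isRead = true ∧ b.val = w.val ∧ b ∈ H := by
  obtain ⟨a, ha, hfa⟩ := Finset.exists_mem_eq_inf' (s := cluster H w)
    (Finset.insert_nonempty _ _) Op.f
  obtain ⟨b, hb, hsb⟩ := Finset.exists_mem_eq_sup' (s := cluster H w)
    (Finset.insert_nonempty _ _) Op.s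
  have hfa : fmin H w = a.f := hfa
  have hsb : smax H w = b.s := hsb
  have hflt : fmin H w < smax H w := hf
  have hsw : w.s < w.f := hWf.1 w hw
  have hbw : b ≠ w := by
    intro h
    have hsb2 : smax H w = w.s := by rw [hsb, h]
    have haw : a ≠ w := by
      intro h2
      have hfa2 : fmin H w = w.f := by rw [hfa, h2]
      linarith
    rcases mem_cluster_iff.mp ha with h2 | ⟨haH, haR, haV⟩
    · exact haw h2
    · obtain ⟨w', hw'H, hw'W, hw'V, hw'f⟩ := hWf.2.2.2 a haH haR
      have hww : w' = w := hWf.2.2.1 w' hw'H w hw hw'W hwW (hw'V.trans haV)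
      have hwf : w.f < a.s := hww ▸ hw'f
      have hsa := hWf.1 a haH
      linarith
  rcases mem_cluster_iff.mp hb with h | ⟨hbH, hbR, hbV⟩
  · exact absurd h hbw
  · exact ⟨a, b, ha, hb, hfa.symm, hsb.symm, hbR, hbV, hbH⟩

end Aux

/-- If a history contains a forward zone that contains the low endpoints of three
other forward zones, then the history is not 2-atomic. -/
theorem stmt_1 (H : History) (hWf : Wf H)
    (w0 w1 w2 w3 : Op) (h0 : w0 ∈ H) (h1 : w1 ∈ H) (h2 : w2 ∈ H) (h3 : w3 ∈ H)
    (hw0 : w0.isWrite) (hw1 : w1.isWrite) (hw2 : w2.isWrite) (hw3 : w3.isWrite)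
    (h01 : w0 ≠ w1) (h02 : w0 ≠ w2) (h03 : w0 ≠ w3)
    (h12 : w1 ≠ w2) (h13 : w1 ≠ w3) (h23 : w2 ≠ w3)
    (hf0 : ForwardZone H w0) (hf1 : ForwardZone H w1)
    (hf2 : ForwardZone H w2) (hf3 : ForwardZone H w3)
    (hc1 : fmin H w1 ∈ zone H w0) (hc2 : fmin H w2 ∈ zone H w0)
    (hc3 : fmin H w3 ∈ zone H w0) :
    ¬ KAtomic 2 H := by
  rintro ⟨l, ⟨hnd, hmemiff⟩, hval, hka⟩
  have hmem : ∀ x ∈ H, x ∈ l := fun x hx => (hmemiff x).mpr hx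
  obtain ⟨a0, b0, ha0c, hb0c, ha0f, hb0s, hb0R, hb0V, hb0H⟩ := zone_ops hWf h0 hw0 hf0
  obtain ⟨a1, b1, ha1c, hb1c, ha1f, hb1s, hb1R, hb1V, hb1H⟩ := zone_ops hWf h1 hw1 hf1
  obtain ⟨a2, b2, ha2c, hb2c, ha2f, hb2s, hb2R, hb2V, hb2H⟩ := zone_ops hWf h2 hw2 hf2
  obtain ⟨a3, b3, ha3c, hb3c, ha3f, hb3s, hb3R, hb3V, hb3H⟩ := zone_ops hWf h3 hw3 hf3
  have ha0H : a0 ∈ H := cluster_subset h0 ha0c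
  have ha1H : a1 ∈ H := cluster_subset h1 ha1c
  have ha2H : a2 ∈ H := cluster_subset h2 ha2c
  have ha3H : a3 ∈ H := cluster_subset h3 ha3c
  have hzl : zoneL H w0 = fmin H w0 := min_eq_left (le_of_lt hf0)
  have hzh : zoneH H w0 = smax H w0 := max_eq_right (le_of_lt hf0)
  rw [zone, hzl, hzh, Set.mem_Icc] at hc1 hc2 hc3
  have before_idx : ∀ {a b : Op}, Before l a b → List.idxOf a l < List.idxOf b l := by
    rintro a b ⟨l1, l2, l3, hd⟩
    obtain ⟨e1, e2⟩ := idx_decomp hnd hd; omega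
  have rt : ∀ a b : Op, a ∈ H → b ∈ H → a.f < b.s → List.idxOf a l < List.idxOf b l :=
    fun a b ha hb h => before_idx (hval a (hmem a ha) b (hmem b hb) h)
  have hwr : ∀ w r : Op, w ∈ H → r ∈ H → r.isRead = true → w.isWrite → w.val = r.val →
      List.idxOf w l < List.idxOf r l := by
    intro w r hw hr hrR hwW hv
    obtain ⟨l1, l2, l3, hd, -⟩ := hka r (hmem r hr) hrR w (hmem w hw) hwW hv
    obtain ⟨e1, e2⟩ := idx_decomp hnd hd; omega
  have wle : ∀ wi ai : Op, wi ∈ H → wi.isWrite → ai ∈ cluster H wi →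
      List.idxOf wi l ≤ List.idxOf ai l := by
    intro wi ai hwi hwiW hai
    rcases mem_cluster_iff.mp hai with rfl | ⟨haH, haR, haV⟩
    · exact le_refl _
    · exact (hwr wi ai hwi haH haR hwiW haV.symm).le
  -- strict real-time precedences a_i -> b0
  have hprec : ∀ ai : Op, ∀ wi : Op, wi ∈ H → wi.isWrite → w0 ≠ wi → ai ∈ cluster H wi →
      ai.f ≤ b0.s → List.idxOf ai l < List.idxOf b0 l := by
    intro ai wi hwi hwiW hne haic hle
    have haiH : ai ∈ H := cluster_subset hwi haic
    have hab : ai ≠ b0 := fun h =>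
      cluster_disjoint hWf hwi h0 hwiW hw0 (Ne.symm hne) haic (by rw [h]; exact hb0c)
    have hne2 : b0.s ≠ ai.f := (hWf.2.1 b0 hb0H ai haiH (Ne.symm hab)).2.2
    exact rt ai b0 haiH hb0H (lt_of_le_of_ne hle (fun h => hne2 h.symm))
  have p1 : List.idxOf a1 l < List.idxOf b0 l :=
    hprec a1 w1 h1 hw1 h01 ha1c (by rw [ha1f, hb0s]; exact hc1.2)
  have p2 : List.idxOf a2 l < List.idxOf b0 l :=
    hprec a2 w2 h2 hw2 h02 ha2c (by rw [ha2f, hb0s]; exact hc2.2)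
  have p3 : List.idxOf a3 l < List.idxOf b0 l :=
    hprec a3 w3 h3 hw3 h03 ha3c (by rw [ha3f, hb0s]; exact hc3.2)
  have q1 : List.idxOf a0 l < List.idxOf b1 l :=
    rt a0 b1 ha0H hb1H (by rw [ha0f, hb1s]; exact lt_of_le_of_lt hc1.1 hf1)
  have q2 : List.idxOf a0 l < List.idxOf b2 l :=
    rt a0 b2 ha0H hb2H (by rw [ha0f, hb2s]; exact lt_of_le_of_lt hc2.1 hf2)
  have q3 : List.idxOf a0 l < List.idxOf b3 l :=
    rt a0 b3 ha0H hb3H (by rw [ha0f, hb3s]; exact lt_of_le_of_lt hc3.1 hf3)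
  have hW1b0 : List.idxOf w1 l < List.idxOf b0 l := lt_of_le_of_lt (wle w1 a1 h1 hw1 ha1c) p1
  have hW2b0 : List.idxOf w2 l < List.idxOf b0 l := lt_of_le_of_lt (wle w2 a2 h2 hw2 ha2c) p2
  have hW3b0 : List.idxOf w3 l < List.idxOf b0 l := lt_of_le_of_lt (wle w3 a3 h3 hw3 ha3c) p3
  have hW0b1 : List.idxOf w0 l < List.idxOf b1 l := lt_of_le_of_lt (wle w0 a0 h0 hw0 ha0c) q1
  have hW0b2 : List.idxOf w0 l < List.idxOf b2 l := lt_of_le_of_lt (wle w0 a0 h0 hw0 ha0c) q2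
  have hW0b3 : List.idxOf w0 l < List.idxOf b3 l := lt_of_le_of_lt (wle w0 a0 h0 hw0 ha0c) q3
  have ne_idx : ∀ {x y : Op}, x ∈ H → y ∈ H → x ≠ y →
      List.idxOf x l ≠ List.idxOf y l := fun hx hy hne h =>
    hne ((List.idxOf_inj (hmem _ hx)).mp h)
  obtain ⟨l1, l2, l3, hdec0, hcnt0⟩ := hka b0 (hmem _ hb0H) hb0R w0 (hmem _ h0) hw0 hb0V.symm
  have hcnt0' : (l2.filter (fun op => op.isRead = false)).length ≤ 1 := hcnt0
  have key : ∀ wa ba wb : Op, wa ∈ H → ba ∈ H → wb ∈ H → ba.isRead = true → wa.isWrite →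
      wa.val = ba.val → wb.isWrite → wb ≠ w0 →
      List.idxOf wa l < List.idxOf wb l → List.idxOf wb l < List.idxOf w0 l →
      List.idxOf w0 l < List.idxOf ba l → False := by
    intro wa ba wb hwa hba hwb hbaR hwaW hv hwbW hne hab hbw hwb0
    obtain ⟨m1, m2, m3, hd, hc⟩ := hka ba (hmem _ hba) hbaR wa (hmem _ hwa) hwaW hv
    have hc' : (m2.filter (fun op => op.isRead = false)).length ≤ 1 := hc
    have hm1 : wb ∈ m2 := mem_mid_s1 hnd hd (hmem _ hwb) hab (hbw.trans hwb0)
    have hm2 : w0 ∈ m2 := mem_mid_s1 hnd hd (hmem _ h0) (hab.trans hbw) hwb0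
    exact two_writes hc' hm1 hm2 hne hwbW hw0
  have pairdone : ∀ wi bi wj bj : Op, wi ∈ H → bi ∈ H → wj ∈ H → bj ∈ H →
      bi.isRead = true → bj.isRead = true → wi.isWrite → wj.isWrite →
      bi.val = wi.val → bj.val = wj.val → wi ≠ wj → wi ≠ w0 → wj ≠ w0 →
      List.idxOf wi l < List.idxOf w0 l → List.idxOf wj l < List.idxOf w0 l →
      List.idxOf w0 l < List.idxOf bi l → List.idxOf w0 l < List.idxOf bj l → False := by
    intro wi bi wj bj hwi hbi hwj hbj hbiR hbjR hwiW hwjW hvi hvj hij hi0 hj0 hLi hLj hbi0 hbj0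
    rcases lt_or_gt_of_ne (ne_idx hwi hwj hij) with h | h
    · exact key wi bi wj hwi hbi hwj hbiR hwiW hvi.symm hwjW hj0 h hLj hbi0
    · exact key wj bj wi hwj hbj hwi hbjR hwjW hvj.symm hwiW hi0 h hLi hbj0
  have hL : ∀ wi : Op, wi ∈ H → wi.isWrite → wi ≠ w0 → List.idxOf wi l < List.idxOf b0 l →
      ¬ List.idxOf wi l < List.idxOf w0 l → wi ∈ l2 := by
    intro wi hwi hwiW hne hib0 hnlt
    have hne' := ne_idx hwi h0 hne
    exact mem_mid_s1 hnd hdec0 (hmem _ hwi) (by omega) hib0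
  by_cases hL1 : List.idxOf w1 l < List.idxOf w0 l <;>
    by_cases hL2 : List.idxOf w2 l < List.idxOf w0 l <;>
      by_cases hL3 : List.idxOf w3 l < List.idxOf w0 l
  · exact pairdone w1 b1 w2 b2 h1 hb1H h2 hb2H hb1R hb2R hw1 hw2 hb1V hb2V h12
      (Ne.symm h01) (Ne.symm h02) hL1 hL2 hW0b1 hW0b2
  · exact pairdone w1 b1 w2 b2 h1 hb1H h2 hb2H hb1R hb2R hw1 hw2 hb1V hb2V h12
      (Ne.symm h01) (Ne.symm h02) hL1 hL2 hW0b1 hW0b2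
  · exact pairdone w1 b1 w3 b3 h1 hb1H h3 hb3H hb1R hb3R hw1 hw3 hb1V hb3V h13
      (Ne.symm h01) (Ne.symm h03) hL1 hL3 hW0b1 hW0b3
  · exact two_writes hcnt0' (hL w2 h2 hw2 (Ne.symm h02) hW2b0 hL2)
      (hL w3 h3 hw3 (Ne.symm h03) hW3b0 hL3) h23 hw2 hw3
  · exact pairdone w2 b2 w3 b3 h2 hb2H h3 hb3H hb2R hb3R hw2 hw3 hb2V hb3V h23
      (Ne.symm h02) (Ne.symm h03) hL2 hL3 hW0b2 hW0b3
  · exact two_writes hcnt0' (hL w1 h1 hw1 (Ne.symm h01) hW1b0 hL1)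
      (hL w3 h3 hw3 (Ne.symm h03) hW3b0 hL3) h13 hw1 hw3
  · exact two_writes hcnt0' (hL w1 h1 hw1 (Ne.symm h01) hW1b0 hL1)
      (hL w2 h2 hw2 (Ne.symm h02) hW2b0 hL2) h12 hw1 hw2
  · exact two_writes hcnt0' (hL w1 h1 hw1 (Ne.symm h01) hW1b0 hL1)
      (hL w2 h2 hw2 (Ne.symm h02) hW2b0 hL2) h12 hw1 hw2
end

section
/- A history H (in which each write assigns a distinct value and every read returns the value of some write that finishes before the read starts) is 1-atomic if and only if no two forward zones of H overlap and no backward zone of H is contained entirely in a forward zone. -/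
open scoped Classical

section Aux

variable {H : History}

lemma mem_cluster {w x : Op} :
    x ∈ cluster H w ↔ x = w ∨ (x ∈ H ∧ x.isRead = true ∧ x.val = w.val) := by
  simp [cluster, and_assoc]

lemma self_mem_cluster {w : Op} : w ∈ cluster H w := mem_cluster.2 (Or.inl rfl)

lemma cluster_mem_H {w x : Op} (hw : w ∈ H) (hx : x ∈ cluster H w) : x ∈ H := by
  rcases mem_cluster.1 hx with rfl | ⟨h, -, -⟩ <;> assumption

lemma sf_ne (hWf : Wf H) {x y : Op} (hx : x ∈ H) (hy : y ∈ H) (hne : x ≠ y) :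
    x.s ≠ y.s ∧ x.f ≠ y.f ∧ x.s ≠ y.f ∧ x.f ≠ y.s := by
  obtain ⟨a1, a2, a3⟩ := hWf.2.1 x hx y hy hne
  obtain ⟨b1, b2, b3⟩ := hWf.2.1 y hy x hx hne.symm
  exact ⟨a1, a2, a3, fun h => b3 h.symm⟩

lemma cluster_disjoint_s2 (hWf : Wf H) {w1 w2 : Op} (h1 : w1 ∈ H) (h2 : w2 ∈ H)
    (hw1 : w1.isWrite) (hw2 : w2.isWrite) (hne : w1 ≠ w2) {x : Op}
    (hx1 : x ∈ cluster H w1) (hx2 : x ∈ cluster H w2) : False := by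
  rcases mem_cluster.1 hx1 with h | ⟨-, hr1, hv1⟩ <;>
    rcases mem_cluster.1 hx2 with h' | ⟨-, hr2, hv2⟩
  · exact hne (h.symm.trans h')
  · have hh : x.isRead = false := by rw [h]; exact hw1
    rw [hh] at hr2; exact Bool.false_ne_true hr2
  · have hh : x.isRead = false := by rw [h']; exact hw2
    rw [hh] at hr1; exact Bool.false_ne_true hr1
  · exact hne (hWf.2.2.1 w1 h1 w2 h2 hw1 hw2 (hv1.symm.trans hv2))

lemma fmin_le {w x : Op} (hx : x ∈ cluster H w) : fmin H w ≤ x.f := Finset.inf'_le _ hx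

lemma le_smax {w x : Op} (hx : x ∈ cluster H w) : x.s ≤ smax H w := Finset.le_sup' _ hx

lemma exists_fmin (H : History) (w : Op) : ∃ x ∈ cluster H w, fmin H w = x.f :=
  Finset.exists_mem_eq_inf' _ _

lemma exists_smax (H : History) (w : Op) : ∃ x ∈ cluster H w, smax H w = x.s :=
  Finset.exists_mem_eq_sup' _ _

lemma smax_ne_fmin (hWf : Wf H) {w1 w2 : Op} (h1 : w1 ∈ H) (h2 : w2 ∈ H)
    (hw1 : w1.isWrite) (hw2 : w2.isWrite) (hne : w1 ≠ w2) :
    smax H w1 ≠ fmin H w2 := by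
  obtain ⟨x, hx, ex⟩ := exists_smax H w1
  obtain ⟨y, hy, ey⟩ := exists_fmin H w2
  have hxy : x ≠ y := fun h => cluster_disjoint_s2 hWf h1 h2 hw1 hw2 hne hx (h ▸ hy)
  rw [ex, ey]
  exact (sf_ne hWf (cluster_mem_H h1 hx) (cluster_mem_H h2 hy) hxy).2.2.1

lemma zoneL_ne (hWf : Wf H) {w1 w2 : Op} (h1 : w1 ∈ H) (h2 : w2 ∈ H)
    (hw1 : w1.isWrite) (hw2 : w2.isWrite) (hne : w1 ≠ w2) :
    zoneL H w1 ≠ zoneL H w2 := by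
  have att : ∀ w, (∃ x ∈ cluster H w, zoneL H w = x.f) ∨ (∃ x ∈ cluster H w, zoneL H w = x.s) := by
    intro w
    rcases min_choice (fmin H w) (smax H w) with h | h
    · obtain ⟨x, hx, e⟩ := exists_fmin H w
      exact Or.inl ⟨x, hx, by rw [zoneL, h, e]⟩
    · obtain ⟨x, hx, e⟩ := exists_smax H w
      exact Or.inr ⟨x, hx, by rw [zoneL, h, e]⟩
  intro he
  rcases att w1 with ⟨x, hx, ex⟩ | ⟨x, hx, ex⟩ <;> rcases att w2 with ⟨y, hy, ey⟩ | ⟨y, hy, ey⟩ <;>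
  · have hxy : x ≠ y := fun h => cluster_disjoint_s2 hWf h1 h2 hw1 hw2 hne hx (h ▸ hy)
    have := sf_ne hWf (cluster_mem_H h1 hx) (cluster_mem_H h2 hy) hxy
    rw [ex, ey] at he
    tauto

/-! ### Before lemmas -/

lemma Before.cons {l : List Op} {a b x : Op} (h : Before l a b) : Before (x :: l) a b := by
  obtain ⟨l1, l2, l3, rfl⟩ := h; exact ⟨x :: l1, l2, l3, rfl⟩

lemma before_of_mem {l : List Op} {a b : Op} (h : b ∈ l) : Before (a :: l) a b := by
  obtain ⟨s, t, rfl⟩ := List.append_of_mem h; exact ⟨[], s, t, rfl⟩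

lemma before_total {l : List Op} {a b : Op} (ha : a ∈ l) (hb : b ∈ l) (hne : a ≠ b) :
    Before l a b ∨ Before l b a := by
  induction l with
  | nil => simp at ha
  | cons x xs ih =>
    rcases List.mem_cons.1 ha with rfl | ha'
    · exact Or.inl (before_of_mem ((List.mem_cons.1 hb).resolve_left (Ne.symm hne)))
    · rcases List.mem_cons.1 hb with rfl | hb'
      · exact Or.inr (before_of_mem ha')
      · rcases ih ha' hb' with h | h
        · exact Or.inl h.cons
        · exact Or.inr h.cons

lemma before_rel {R : Op → Op → Prop} {l : List Op} (hp : l.Pairwise R) {a b : Op}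
    (h : Before l a b) : R a b := by
  obtain ⟨l1, l2, l3, rfl⟩ := h
  have hsub : List.Sublist [a, b] (l1 ++ a :: l2 ++ b :: l3) := by
    rw [List.append_assoc]
    refine List.Sublist.trans ?_ (List.sublist_append_right l1 _)
    rw [List.cons_append]
    exact List.Sublist.cons₂ a (List.singleton_sublist.2 (by simp))
  have hp2 := hp.sublist hsub
  exact (List.pairwise_cons.1 hp2).1 b (by simp)

lemma before_of_not_rel {R : Op → Op → Prop} {l : List Op} (hp : l.Pairwise R)
    {a b : Op} (ha : a ∈ l) (hb : b ∈ l) (hne : a ≠ b) (hn : ¬ R b a) : Before l a b :=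
  (before_total ha hb hne).resolve_right fun h => hn (before_rel hp h)

lemma before_idxOf {l : List Op} (hnd : l.Nodup) {a b : Op} (h : Before l a b) :
    l.idxOf a < l.idxOf b := by
  obtain ⟨l1, l2, l3, rfl⟩ := h
  induction l1 with
  | nil =>
    simp only [List.nil_append, List.cons_append] at hnd ⊢
    rw [List.nodup_cons] at hnd
    have hab : a ≠ b := fun h => hnd.1 (h ▸ (by simp : b ∈ l2 ++ b :: l3))
    rw [List.idxOf_cons_self, List.idxOf_cons_ne _ hab]
    exact Nat.succ_pos _
  | cons x xs ih =>
    simp only [List.cons_append] at hnd ⊢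
    rw [List.nodup_cons] at hnd
    have hxa : x ≠ a := fun h => hnd.1 (h ▸ (by simp : a ∈ (xs ++ a :: l2) ++ b :: l3))
    have hxb : x ≠ b := fun h => hnd.1 (h ▸ (by simp : b ∈ (xs ++ a :: l2) ++ b :: l3))
    rw [List.idxOf_cons_ne _ hxa, List.idxOf_cons_ne _ hxb]
    exact Nat.succ_lt_succ (ih hnd.2)

/-! ### dictating write -/

noncomputable def dwrite (H : History) (op : Op) : Op :=
  if h : ∃ w, w ∈ H ∧ w.isRead = false ∧ w.val = op.val then h.choose else op

lemma dwrite_spec (hWf : Wf H) {op : Op} (hop : op ∈ H) :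
    dwrite H op ∈ H ∧ (dwrite H op).isRead = false ∧ (dwrite H op).val = op.val := by
  have h : ∃ w, w ∈ H ∧ w.isRead = false ∧ w.val = op.val := by
    cases hr : op.isRead
    · exact ⟨op, hop, hr, rfl⟩
    · obtain ⟨w, hw, hw', hv, -⟩ := hWf.2.2.2 op hop hr
      exact ⟨w, hw, hw', hv⟩
  rw [dwrite, dif_pos h]; exact h.choose_spec

lemma dwrite_eq (hWf : Wf H) {op w : Op} (hop : op ∈ H) (hw : w ∈ H) (hw' : w.isWrite)
    (hv : w.val = op.val) : dwrite H op = w := by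
  have h := dwrite_spec hWf hop
  exact hWf.2.2.1 _ h.1 w hw h.2.1 hw' (h.2.2.trans hv.symm)

lemma mem_cluster_dwrite (hWf : Wf H) {op : Op} (hop : op ∈ H) :
    op ∈ cluster H (dwrite H op) := by
  cases hr : op.isRead
  · rw [dwrite_eq hWf hop hop hr rfl]; exact self_mem_cluster
  · exact mem_cluster.2 (Or.inr ⟨hop, hr, ((dwrite_spec hWf hop).2.2).symm⟩)

lemma dwrite_f_lt (hWf : Wf H) {op : Op} (hop : op ∈ H) (hr : op.isRead = true) :
    (dwrite H op).f < op.s := by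
  obtain ⟨w, hw, hw', hv, hf⟩ := hWf.2.2.2 op hop hr
  rw [dwrite_eq hWf hop hw hw' hv]; exact hf

end Aux

section Main

variable {H : History}

lemma zoneL_lt (hWf : Wf H)
    (hZ1 : ∀ w1 ∈ H, ∀ w2 ∈ H, w1.isWrite → w2.isWrite → w1 ≠ w2 →
      ForwardZone H w1 → ForwardZone H w2 → zone H w1 ∩ zone H w2 = ∅)
    (hZ2 : ∀ wb ∈ H, ∀ wf ∈ H, wb.isWrite → wf.isWrite → wb ≠ wf →
      ¬ ForwardZone H wb → ForwardZone H wf → ¬ zone H wb ⊆ zone H wf)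
    {w1 w2 : Op} (h1 : w1 ∈ H) (h2 : w2 ∈ H) (hw1 : w1.isWrite) (hw2 : w2.isWrite)
    (hne : w1 ≠ w2) (h : fmin H w1 < smax H w2) : zoneL H w1 < zoneL H w2 := by
  by_cases hf1 : ForwardZone H w1 <;> by_cases hf2 : ForwardZone H w2
  · have e1 : zoneL H w1 = fmin H w1 := min_eq_left hf1.le
    have e2 : zoneL H w2 = fmin H w2 := min_eq_left hf2.le
    rw [e1, e2]
    by_contra hc
    push_neg at hc
    have hx : fmin H w1 ∈ zone H w1 ∩ zone H w2 := by
      refine ⟨⟨min_le_left _ _, le_max_left _ _⟩, ⟨?_, ?_⟩⟩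
      · rw [e2]; exact hc
      · have e3 : zoneH H w2 = smax H w2 := max_eq_right hf2.le
        rw [e3]; exact h.le
    rw [hZ1 w1 h1 w2 h2 hw1 hw2 hne hf1 hf2] at hx
    exact hx
  · have e1 : zoneL H w1 = fmin H w1 := min_eq_left hf1.le
    have e2 : zoneL H w2 = smax H w2 := min_eq_right (not_lt.1 hf2)
    rw [e1, e2]; exact h
  · have e1 : zoneL H w1 = smax H w1 := min_eq_right (not_lt.1 hf1)
    have e2 : zoneL H w2 = fmin H w2 := min_eq_left hf2.le
    rw [e1, e2]
    by_contra hc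
    push_neg at hc
    refine hZ2 w1 h1 w2 h2 hw1 hw2 hne hf1 hf2 ?_
    rw [zone, zone]
    apply Set.Icc_subset_Icc
    · rw [e1, e2]; exact hc
    · have e3 : zoneH H w1 = fmin H w1 := max_eq_left (not_lt.1 hf1)
      have e4 : zoneH H w2 = smax H w2 := max_eq_right hf2.le
      rw [e3, e4]; exact h.le
  · have e1 : zoneL H w1 = smax H w1 := min_eq_right (not_lt.1 hf1)
    have e2 : zoneL H w2 = smax H w2 := min_eq_right (not_lt.1 hf2)
    rw [e1, e2]
    exact lt_of_le_of_lt (not_lt.1 hf1) h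

/-- Key for sorting: primary = zoneL of the cluster, secondary = start time. -/
noncomputable def gkey (H : History) (op : Op) : ℝ ×ₗ ℝ := toLex (zoneL H (dwrite H op), op.s)

lemma block_order (hWf : Wf H) {l : List Op} (hlin : IsLinearization H l) (hv : Valid l)
    (hk : KAtomicOrder 1 l) {w1 w2 : Op} (h1 : w1 ∈ H) (h2 : w2 ∈ H)
    (hw1 : w1.isWrite) (hw2 : w2.isWrite) (hne : w1 ≠ w2)
    (hidx : l.idxOf w1 < l.idxOf w2) : smax H w1 < fmin H w2 := by
  obtain ⟨hnd, hmem⟩ := hlin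
  have hA : ∀ a ∈ cluster H w1, l.idxOf a < l.idxOf w2 := by
    intro a ha
    rcases mem_cluster.1 ha with rfl | ⟨haH, hrd, hval⟩
    · exact hidx
    · obtain ⟨l1, l2, l3, hdec, hlen⟩ :=
        hk a ((hmem a).2 haH) hrd w1 ((hmem w1).2 h1) hw1 hval.symm
      have hfil : l2.filter (fun op => op.isRead = false) = [] :=
        List.length_eq_zero_iff.1 (Nat.le_zero.1 hlen)
      have hw2w : w2.isRead = false := hw2
      have hw2l : w2 ∈ l := (hmem w2).2 h2
      rw [hdec] at hw2l
      rcases List.mem_append.1 hw2l with h | h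
      · rcases List.mem_append.1 h with h | h
        · obtain ⟨s, t, hst⟩ := List.append_of_mem h
          have hb : Before l w2 w1 :=
            ⟨s, t, l2 ++ a :: l3, by rw [hdec, hst]; simp⟩
          have := before_idxOf hnd hb
          omega
        rcases List.mem_cons.1 h with h | h
        · exact absurd h.symm hne
        · exfalso
          have : w2 ∈ l2.filter (fun op => op.isRead = false) :=
            List.mem_filter.2 ⟨h, by simp [hw2w]⟩
          rw [hfil] at this
          exact List.not_mem_nil this
      rcases List.mem_cons.1 h with h | h
      · exfalso
        rw [h] at hw2w
        rw [hrd] at hw2w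
        simp at hw2w
      · obtain ⟨u, v, huv⟩ := List.append_of_mem h
        have hb : Before l a w2 :=
          ⟨l1 ++ w1 :: l2, u, v, by rw [hdec, huv]; simp⟩
        exact before_idxOf hnd hb
  have hB : ∀ b ∈ cluster H w2, l.idxOf w2 ≤ l.idxOf b := by
    intro b hb
    rcases mem_cluster.1 hb with rfl | ⟨hbH, hrd, hval⟩
    · exact le_refl _
    · obtain ⟨l1, l2, l3, hdec, -⟩ :=
        hk b ((hmem b).2 hbH) hrd w2 ((hmem w2).2 h2) hw2 hval.symm
      exact (before_idxOf hnd ⟨l1, l2, l3, hdec⟩).le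
  have hsf : ∀ a ∈ cluster H w1, ∀ b ∈ cluster H w2, a.s ≤ b.f := by
    intro a ha b hb
    by_contra hc
    push_neg at hc
    have hbl : b ∈ l := (hmem b).2 (cluster_mem_H h2 hb)
    have hal : a ∈ l := (hmem a).2 (cluster_mem_H h1 ha)
    have := before_idxOf hnd (hv b hbl a hal hc)
    have := hA a ha
    have := hB b hb
    omega
  have hle : smax H w1 ≤ fmin H w2 :=
    Finset.sup'_le _ _ fun a ha => Finset.le_inf' _ _ fun b hb => hsf a ha b hb
  exact hle.lt_of_ne (smax_ne_fmin hWf h1 h2 hw1 hw2 hne)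

end Main

/-- Gibbons–Korach: a well-formed history is 1-atomic iff no two forward zones
overlap and no backward zone is contained entirely in a forward zone. -/
theorem stmt_2 (H : History) (hWf : Wf H) :
    KAtomic 1 H ↔
      ((∀ w1 ∈ H, ∀ w2 ∈ H, w1.isWrite → w2.isWrite → w1 ≠ w2 →
          ForwardZone H w1 → ForwardZone H w2 → zone H w1 ∩ zone H w2 = ∅) ∧
       (∀ wb ∈ H, ∀ wf ∈ H, wb.isWrite → wf.isWrite → wb ≠ wf →
          ¬ ForwardZone H wb → ForwardZone H wf → ¬ zone H wb ⊆ zone H wf)) := by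
  constructor
  · rintro ⟨l, hlin, hv, hk⟩
    have hnd := hlin.1
    have hmem := hlin.2
    constructor
    · intro w1 h1 w2 h2 hw1 hw2 hne hf1 hf2
      have hne' : l.idxOf w1 ≠ l.idxOf w2 :=
        fun h => hne ((List.idxOf_inj ((hmem w1).2 h1)).1 h)
      rcases hne'.lt_or_gt with hidx | hidx
      · have hlt := block_order hWf hlin hv hk h1 h2 hw1 hw2 hne hidx
        apply Set.eq_empty_iff_forall_notMem.2
        rintro x ⟨⟨-, hx1⟩, ⟨hx2, -⟩⟩
        rw [zoneH, max_eq_right hf1.le] at hx1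
        rw [zoneL, min_eq_left hf2.le] at hx2
        linarith
      · have hlt := block_order hWf hlin hv hk h2 h1 hw2 hw1 hne.symm hidx
        apply Set.eq_empty_iff_forall_notMem.2
        rintro x ⟨⟨hx1, -⟩, ⟨-, hx2⟩⟩
        rw [zoneL, min_eq_left hf1.le] at hx1
        rw [zoneH, max_eq_right hf2.le] at hx2
        linarith
    · intro wb hbH wf hfH hwb hwf hne hnf hf hsub
      have hne' : l.idxOf wb ≠ l.idxOf wf :=
        fun h => hne ((List.idxOf_inj ((hmem wb).2 hbH)).1 h)
      rcases hne'.lt_or_gt with hidx | hidx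
      · have hlt := block_order hWf hlin hv hk hbH hfH hwb hwf hne hidx
        have hmz : smax H wb ∈ zone H wb := ⟨min_le_right _ _, le_max_right _ _⟩
        have h2 := (hsub hmz).1
        rw [zoneL, min_eq_left hf.le] at h2
        linarith
      · have hlt := block_order hWf hlin hv hk hfH hbH hwf hwb hne.symm hidx
        have hmz : fmin H wb ∈ zone H wb := ⟨min_le_left _ _, le_max_left _ _⟩
        have h2 := (hsub hmz).2
        rw [zoneH, max_eq_right hf.le] at h2
        linarith
  · rintro ⟨hZ1, hZ2⟩
    classical
    set le : Op → Op → Bool := fun a b => decide (gkey H a ≤ gkey H b) with hle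
    set l := H.toList.mergeSort le with hldef
    have hperm : l.Perm H.toList := List.mergeSort_perm _ _
    have hmem : ∀ op, op ∈ l ↔ op ∈ H := fun op => hperm.mem_iff.trans Finset.mem_toList
    have hnd : l.Nodup := hperm.nodup_iff.2 H.nodup_toList
    have hsorted : l.Pairwise (fun a b => le a b = true) := by
      apply List.pairwise_mergeSort
      · intro a b c hab hbc
        exact decide_eq_true (le_trans (of_decide_eq_true hab) (of_decide_eq_true hbc))
      · intro a b
        rcases le_total (gkey H a) (gkey H b) with h | h <;> simp [hle, h]
    have hkb : ∀ a ∈ l, ∀ b ∈ l, gkey H a < gkey H b → Before l a b := by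
      intro a ha b hb hlt
      refine before_of_not_rel hsorted ha hb (fun h => lt_irrefl _ (h ▸ hlt)) ?_
      intro hR
      exact absurd (of_decide_eq_true hR) (not_le.2 hlt)
    refine ⟨l, ⟨hnd, hmem⟩, ?_, ?_⟩
    · -- Valid
      intro a ha b hb hfs
      have haH := (hmem a).1 ha
      have hbH := (hmem b).1 hb
      have hda := dwrite_spec hWf haH
      have hdb := dwrite_spec hWf hbH
      apply hkb a ha b hb
      rw [gkey, gkey]
      by_cases hww : dwrite H a = dwrite H b
      · exact (Prod.Lex.lt_iff).2 (Or.inr ⟨by rw [hww]; rfl, lt_trans (hWf.1 a haH) hfs⟩)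
      · refine (Prod.Lex.lt_iff).2 (Or.inl ?_)
        apply zoneL_lt hWf hZ1 hZ2 hda.1 hdb.1 hda.2.1 hdb.2.1 hww
        calc fmin H (dwrite H a) ≤ a.f := fmin_le (mem_cluster_dwrite hWf haH)
          _ < b.s := hfs
          _ ≤ smax H (dwrite H b) := le_smax (mem_cluster_dwrite hWf hbH)
    · -- KAtomicOrder 1
      intro r hr hrd w hw hwr hval
      have hrH := (hmem r).1 hr
      have hwH := (hmem w).1 hw
      have hdr : dwrite H r = w := dwrite_eq hWf hrH hwH hwr hval
      have hdw : dwrite H w = w := dwrite_eq hWf hwH hwH hwr rfl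
      have hfs : w.f < r.s := by
        have := dwrite_f_lt hWf hrH hrd
        rwa [hdr] at this
      have hwlt : gkey H w < gkey H r := by
        rw [gkey, gkey]
        exact (Prod.Lex.lt_iff).2
          (Or.inr ⟨by rw [hdw, hdr]; rfl, lt_trans (hWf.1 w hwH) hfs⟩)
      obtain ⟨l1, l2, l3, hdec⟩ := hkb w hw r hr hwlt
      refine ⟨l1, l2, l3, hdec, ?_⟩
      suffices hfil : l2.filter (fun op => op.isRead = false) = [] by
        rw [hfil]; simp
      rw [List.eq_nil_iff_forall_not_mem]
      intro x hx
      rw [List.mem_filter] at hx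
      obtain ⟨hxl2, hxw⟩ := hx
      have hxwrite : x.isRead = false := of_decide_eq_true hxw
      have hxl : x ∈ l := by rw [hdec]; simp [hxl2]
      have hxH := (hmem x).1 hxl
      have hdx : dwrite H x = x := dwrite_eq hWf hxH hxH hxwrite rfl
      have hsubl : List.Sublist [w, x, r] l := by
        rw [hdec, List.append_assoc]
        refine List.Sublist.trans ?_ (List.sublist_append_right l1 _)
        rw [List.cons_append]
        refine List.Sublist.cons₂ w ?_
        have : List.Sublist ([x] ++ [r]) (l2 ++ r :: l3) :=
          List.Sublist.append (List.singleton_sublist.2 hxl2)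
            (List.singleton_sublist.2 (by simp))
        simpa using this
      have hp := hsorted.sublist hsubl
      have h1 : le w x = true := (List.pairwise_cons.1 hp).1 x (by simp)
      have h2 : le x r = true := (List.pairwise_cons.1 (List.pairwise_cons.1 hp).2).1 r (by simp)
      have hk1 : gkey H w ≤ gkey H x := of_decide_eq_true h1
      have hk2 : gkey H x ≤ gkey H r := of_decide_eq_true h2
      rw [gkey, gkey] at hk1
      rw [gkey, gkey] at hk2
      have c1 : zoneL H (dwrite H w) ≤ zoneL H (dwrite H x) := by
        rcases (Prod.Lex.le_iff).1 hk1 with h | ⟨h, -⟩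
        · exact le_of_lt h
        · exact le_of_eq h
      have c2 : zoneL H (dwrite H x) ≤ zoneL H (dwrite H r) := by
        rcases (Prod.Lex.le_iff).1 hk2 with h | ⟨h, -⟩
        · exact le_of_lt h
        · exact le_of_eq h
      rw [hdw] at c1
      rw [hdx] at c1 c2
      rw [hdr] at c2
      have hxeqw : x = w := by
        by_contra hne
        exact zoneL_ne hWf hxH hwH hxwrite hwr hne (le_antisymm c2 c1)
      -- but w ∉ l2 by nodup
      rw [hdec, List.nodup_append, List.nodup_append, List.nodup_cons] at hnd
      exact hnd.1.2.1.1 (hxeqw ▸ hxl2)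
end

section
/- A history H is 2-atomic if and only if for every maximal chunk K in the chunk set CS(H), the projection H|K of H onto K is 2-atomic. -/
open scoped Classical

/-- Union of the forward zones of the clusters (identified by their dictating
writes) in `K`. -/
def fwdUnion (H : History) (K : Finset Op) : Set ℝ :=
  ⋃ w ∈ {w ∈ (K : Set Op) | ForwardZone H w}, zone H w

/-- Union of the backward zones of the clusters in `K`. -/
def bwdUnion (H : History) (K : Finset Op) : Set ℝ :=
  ⋃ w ∈ {w ∈ (K : Set Op) | ¬ ForwardZone H w}, zone H w

/-- A chunk: a set of clusters (identified by their dictating writes) whose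
forward zones union to a continuous nonempty time interval containing the
union of the chunk's backward zones. -/
def IsChunk (H : History) (K : Finset Op) : Prop :=
  (∀ w ∈ K, w ∈ H ∧ w.isWrite) ∧
  (fwdUnion H K).Nonempty ∧ (fwdUnion H K).OrdConnected ∧
  bwdUnion H K ⊆ fwdUnion H K

/-- A maximal chunk: no further cluster can be added while remaining a chunk. -/
def MaximalChunk (H : History) (K : Finset Op) : Prop :=
  IsChunk H K ∧ ∀ w ∈ H, w.isWrite → w ∉ K → ¬ IsChunk H (insert w K)

/-- A chunk set of `H`: a set of maximal chunks covering every forward cluster. -/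
def ChunkSet (H : History) (CS : Finset (Finset Op)) : Prop :=
  (∀ K ∈ CS, MaximalChunk H K) ∧
  ∀ w ∈ H, w.isWrite → ForwardZone H w → ∃ K ∈ CS, w ∈ K

/-- The projection `H|K` of `H` onto the chunk `K`: all operations of clusters in `K`. -/
noncomputable def proj (H : History) (K : Finset Op) : History :=
  H.filter (fun op => ∃ w ∈ K, op ∈ cluster H w)


section ClusterLemmas

variable {H : History} {K K' : Finset Op} {w p r u : Op}

theorem mem_cluster_self (H : History) (w : Op) : w ∈ cluster H w :=
  Finset.mem_insert_self _ _

theorem mem_cluster_elim (h : p ∈ cluster H w) :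
    p = w ∨ (p ∈ H ∧ p.isRead = true ∧ p.val = w.val) := by
  rcases Finset.mem_insert.mp h with h | h
  · exact Or.inl h
  · rcases Finset.mem_filter.mp h with ⟨h1, h2⟩
    exact Or.inr ⟨h1, h2⟩

theorem cluster_subset_s3 (hw : w ∈ H) : cluster H w ⊆ H := by
  intro p hp
  rcases mem_cluster_elim hp with rfl | h
  · exact hw
  · exact h.1

theorem write_eq_of_mem_cluster (hpW : p.isWrite) (hp : p ∈ cluster H w) : p = w := by
  rcases mem_cluster_elim hp with rfl | h
  · rfl
  · rw [Op.isWrite, h.2.1] at hpW; cases hpW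

theorem read_of_mem_cluster (hp : p ∈ cluster H w) (hne : p ≠ w) :
    p ∈ H ∧ p.isRead = true ∧ p.val = w.val :=
  (mem_cluster_elim hp).resolve_left hne

theorem dict_lt (hWf : Wf H) (hw : w ∈ H) (hwW : w.isWrite) (hr : r ∈ cluster H w)
    (hne : r ≠ w) : w.f < r.s := by
  obtain ⟨hrH, hrR, hrv⟩ := read_of_mem_cluster hr hne
  obtain ⟨w', hw'H, hw'W, hw'v, hw'f⟩ := hWf.2.2.2 r hrH hrR
  have : w' = w := hWf.2.2.1 w' hw'H w hw hw'W hwW (hw'v.trans hrv)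
  exact this ▸ hw'f

theorem fmin_le_s3 (hp : p ∈ cluster H w) : fmin H w ≤ p.f := Finset.inf'_le _ hp

theorem le_smax_s3 (hp : p ∈ cluster H w) : p.s ≤ smax H w := Finset.le_sup' _ hp

theorem zoneL_le (hp : p ∈ cluster H w) : zoneL H w ≤ p.f :=
  le_trans (min_le_left _ _) (fmin_le_s3 hp)

theorem le_zoneH (hp : p ∈ cluster H w) : p.s ≤ zoneH H w :=
  le_trans (le_smax_s3 hp) (le_max_right _ _)

theorem zoneL_le_zoneH : zoneL H w ≤ zoneH H w := min_le_max

theorem zoneL_mem_zone : zoneL H w ∈ zone H w := ⟨le_refl _, zoneL_le_zoneH⟩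

theorem zoneH_mem_zone : zoneH H w ∈ zone H w := ⟨zoneL_le_zoneH, le_refl _⟩

theorem forward_of_read (hWf : Wf H) (hw : w ∈ H) (hwW : w.isWrite)
    (hr : r ∈ cluster H w) (hne : r ≠ w) : ForwardZone H w :=
  lt_of_le_of_lt (fmin_le_s3 (mem_cluster_self H w))
    (lt_of_lt_of_le (dict_lt hWf hw hwW hr hne) (le_smax_s3 hr))

theorem cluster_eq_singleton (hWf : Wf H) (hw : w ∈ H) (hwW : w.isWrite)
    (hnf : ¬ ForwardZone H w) : cluster H w = {w} := by
  ext p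
  simp only [Finset.mem_singleton]
  constructor
  · intro hp
    by_contra hne
    exact hnf (forward_of_read hWf hw hwW hp hne)
  · rintro rfl; exact mem_cluster_self _ _

theorem zone_backward (hWf : Wf H) (hw : w ∈ H) (hwW : w.isWrite)
    (hnf : ¬ ForwardZone H w) : zone H w = Set.Icc w.s w.f := by
  have hc := cluster_eq_singleton hWf hw hwW hnf
  have hf : fmin H w = w.f := by
    refine le_antisymm (fmin_le_s3 (mem_cluster_self H w)) (Finset.le_inf' _ _ ?_)
    intro p hp
    rw [hc, Finset.mem_singleton] at hp
    rw [hp]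
  have hs : smax H w = w.s := by
    refine le_antisymm (Finset.sup'_le _ _ ?_) (le_smax_s3 (mem_cluster_self H w))
    intro p hp
    rw [hc, Finset.mem_singleton] at hp
    rw [hp]
  have hsf : w.s ≤ w.f := le_of_lt (hWf.1 w hw)
  rw [zone, zoneL, zoneH, hf, hs, min_eq_right hsf, max_eq_left hsf]

theorem mem_fwdUnion {t : ℝ} :
    t ∈ fwdUnion H K ↔ ∃ w ∈ K, ForwardZone H w ∧ t ∈ zone H w := by
  simp only [fwdUnion, Set.mem_iUnion, Set.mem_setOf_eq, Finset.mem_coe]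
  constructor
  · rintro ⟨w, ⟨hwK, hwF⟩, ht⟩; exact ⟨w, hwK, hwF, ht⟩
  · rintro ⟨w, hwK, hwF, ht⟩; exact ⟨w, ⟨hwK, hwF⟩, ht⟩

theorem mem_bwdUnion {t : ℝ} :
    t ∈ bwdUnion H K ↔ ∃ w ∈ K, ¬ ForwardZone H w ∧ t ∈ zone H w := by
  simp only [bwdUnion, Set.mem_iUnion, Set.mem_setOf_eq, Finset.mem_coe]
  constructor
  · rintro ⟨w, ⟨hwK, hwF⟩, ht⟩; exact ⟨w, hwK, hwF, ht⟩
  · rintro ⟨w, hwK, hwF, ht⟩; exact ⟨w, ⟨hwK, hwF⟩, ht⟩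

/-- Low endpoint of a chunk interval. -/
noncomputable def iA (H : History) (K : Finset Op) : ℝ := sInf (fwdUnion H K)

/-- High endpoint of a chunk interval. -/
noncomputable def iB (H : History) (K : Finset Op) : ℝ := sSup (fwdUnion H K)

theorem fwdUnion_Icc (hK : IsChunk H K) :
    iA H K ≤ iB H K ∧ fwdUnion H K = Set.Icc (iA H K) (iB H K) := by
  classical
  set F := K.filter (fun w => ForwardZone H w) with hF
  have hFne : F.Nonempty := by
    obtain ⟨t, ht⟩ := hK.2.1
    obtain ⟨w, hwK, hwF, _⟩ := mem_fwdUnion.mp ht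
    exact ⟨w, Finset.mem_filter.mpr ⟨hwK, hwF⟩⟩
  set a := F.inf' hFne (zoneL H) with ha
  set b := F.sup' hFne (zoneH H) with hb
  have haMem : a ∈ fwdUnion H K := by
    obtain ⟨w0, hw0, he⟩ := Finset.exists_mem_eq_inf' hFne (zoneL H)
    obtain ⟨hw0K, hw0F⟩ := Finset.mem_filter.mp hw0
    rw [mem_fwdUnion]
    exact ⟨w0, hw0K, hw0F, by rw [ha, he]; exact zoneL_mem_zone⟩
  have hbMem : b ∈ fwdUnion H K := by
    obtain ⟨w0, hw0, he⟩ := Finset.exists_mem_eq_sup' hFne (zoneH H)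
    obtain ⟨hw0K, hw0F⟩ := Finset.mem_filter.mp hw0
    rw [mem_fwdUnion]
    exact ⟨w0, hw0K, hw0F, by rw [hb, he]; exact zoneH_mem_zone⟩
  have hsub1 : fwdUnion H K ⊆ Set.Icc a b := by
    intro t ht
    obtain ⟨w, hwK, hwF, ht1, ht2⟩ := mem_fwdUnion.mp ht
    have hwF' : w ∈ F := Finset.mem_filter.mpr ⟨hwK, hwF⟩
    exact ⟨le_trans (Finset.inf'_le _ hwF') ht1, le_trans ht2 (Finset.le_sup' _ hwF')⟩
  have hsub2 : Set.Icc a b ⊆ fwdUnion H K := hK.2.2.1.out haMem hbMem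
  have heq : fwdUnion H K = Set.Icc a b := Set.Subset.antisymm hsub1 hsub2
  have hab : a ≤ b := (hsub1 haMem).2
  have hiA : iA H K = a := by rw [iA, heq, csInf_Icc hab]
  have hiB : iB H K = b := by rw [iB, heq, csSup_Icc hab]
  rw [hiA, hiB]
  exact ⟨hab, heq⟩

theorem zone_subset_fwd (hK : IsChunk H K) (hw : w ∈ K) : zone H w ⊆ fwdUnion H K := by
  by_cases hf : ForwardZone H w
  · intro t ht; exact mem_fwdUnion.mpr ⟨w, hw, hf, ht⟩
  · intro t ht
    exact hK.2.2.2 (mem_bwdUnion.mpr ⟨w, hw, hf, ht⟩)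

theorem ops_bound (hK : IsChunk H K) (hw : w ∈ K) (hp : p ∈ cluster H w) :
    iA H K ≤ p.f ∧ p.s ≤ iB H K := by
  have h1 := zone_subset_fwd hK hw
  rw [(fwdUnion_Icc hK).2] at h1
  have hL := h1 zoneL_mem_zone
  have hH := h1 zoneH_mem_zone
  exact ⟨le_trans hL.1 (zoneL_le hp), le_trans (le_zoneH hp) hH.2⟩

theorem icc_union_icc {a b c d t : ℝ} (h1 : t ∈ Set.Icc a b) (h2 : t ∈ Set.Icc c d) :
    Set.Icc a b ∪ Set.Icc c d = Set.Icc (min a c) (max b d) := by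
  ext x
  simp only [Set.mem_union, Set.mem_Icc]
  constructor
  · rintro (⟨h3, h4⟩ | ⟨h3, h4⟩)
    · exact ⟨le_trans (min_le_left _ _) h3, le_trans h4 (le_max_left _ _)⟩
    · exact ⟨le_trans (min_le_right _ _) h3, le_trans h4 (le_max_right _ _)⟩
  · rintro ⟨h3, h4⟩
    rcases le_total x t with hxt | htx
    · rcases min_le_iff.mp h3 with h5 | h5
      · exact Or.inl ⟨h5, le_trans hxt h1.2⟩
      · exact Or.inr ⟨h5, le_trans hxt h2.2⟩
    · rcases le_max_iff.mp h4 with h5 | h5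
      · exact Or.inl ⟨le_trans h1.1 htx, h5⟩
      · exact Or.inr ⟨le_trans h2.1 htx, h5⟩

theorem fwdUnion_insert_fwd (hf : ForwardZone H w) :
    fwdUnion H (insert w K) = zone H w ∪ fwdUnion H K := by
  ext t
  simp only [mem_fwdUnion, Finset.mem_insert, Set.mem_union]
  constructor
  · rintro ⟨w', rfl | hw', hf', ht⟩
    · exact Or.inl ht
    · exact Or.inr ⟨w', hw', hf', ht⟩
  · rintro (ht | ht)
    · exact ⟨w, Or.inl rfl, hf, ht⟩
    · obtain ⟨w', hw', hf', ht⟩ := ht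
      exact ⟨w', Or.inr hw', hf', ht⟩

theorem fwdUnion_insert_bwd (hf : ¬ ForwardZone H w) :
    fwdUnion H (insert w K) = fwdUnion H K := by
  ext t
  simp only [mem_fwdUnion, Finset.mem_insert]
  constructor
  · rintro ⟨w', rfl | hw', hf', ht⟩
    · exact absurd hf' hf
    · exact ⟨w', hw', hf', ht⟩
  · rintro ⟨w', hw', hf', ht⟩
    exact ⟨w', Or.inr hw', hf', ht⟩

theorem bwdUnion_insert_fwd (hf : ForwardZone H w) :
    bwdUnion H (insert w K) = bwdUnion H K := by
  ext t
  simp only [mem_bwdUnion, Finset.mem_insert]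
  constructor
  · rintro ⟨w', rfl | hw', hf', ht⟩
    · exact absurd hf hf'
    · exact ⟨w', hw', hf', ht⟩
  · rintro ⟨w', hw', hf', ht⟩
    exact ⟨w', Or.inr hw', hf', ht⟩

theorem bwdUnion_insert_bwd (hf : ¬ ForwardZone H w) :
    bwdUnion H (insert w K) = zone H w ∪ bwdUnion H K := by
  ext t
  simp only [mem_bwdUnion, Finset.mem_insert, Set.mem_union]
  constructor
  · rintro ⟨w', rfl | hw', hf', ht⟩
    · exact Or.inl ht
    · exact Or.inr ⟨w', hw', hf', ht⟩
  · rintro (ht | ht)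
    · exact ⟨w, Or.inl rfl, hf, ht⟩
    · obtain ⟨w', hw', hf', ht⟩ := ht
      exact ⟨w', Or.inr hw', hf', ht⟩

theorem mem_of_fwd_touch (hM : MaximalChunk H K) (hwH : w ∈ H) (hwW : w.isWrite)
    (hf : ForwardZone H w) (ht : (zone H w ∩ fwdUnion H K).Nonempty) : w ∈ K := by
  by_contra hwK
  apply hM.2 w hwH hwW hwK
  obtain ⟨t, ht1, ht2⟩ := ht
  obtain ⟨hab, hIcc⟩ := fwdUnion_Icc hM.1
  refine ⟨?_, ?_, ?_, ?_⟩
  · intro w' hw'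
    rcases Finset.mem_insert.mp hw' with rfl | h
    · exact ⟨hwH, hwW⟩
    · exact hM.1.1 w' h
  · rw [fwdUnion_insert_fwd hf]
    exact ⟨t, Or.inl ht1⟩
  · rw [fwdUnion_insert_fwd hf, hIcc]
    have ht2' : t ∈ Set.Icc (iA H K) (iB H K) := hIcc ▸ ht2
    rw [zone] at ht1
    rw [show zone H w = Set.Icc (zoneL H w) (zoneH H w) from rfl]
    rw [icc_union_icc ht1 ht2']
    exact Set.ordConnected_Icc
  · rw [fwdUnion_insert_fwd hf, bwdUnion_insert_fwd hf]
    exact hM.1.2.2.2.trans Set.subset_union_right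

theorem mem_of_bwd_sub (hM : MaximalChunk H K) (hwH : w ∈ H) (hwW : w.isWrite)
    (hf : ¬ ForwardZone H w) (ht : zone H w ⊆ fwdUnion H K) : w ∈ K := by
  by_contra hwK
  apply hM.2 w hwH hwW hwK
  refine ⟨?_, ?_, ?_, ?_⟩
  · intro w' hw'
    rcases Finset.mem_insert.mp hw' with rfl | h
    · exact ⟨hwH, hwW⟩
    · exact hM.1.1 w' h
  · rw [fwdUnion_insert_bwd hf]; exact hM.1.2.1
  · rw [fwdUnion_insert_bwd hf]; exact hM.1.2.2.1
  · rw [fwdUnion_insert_bwd hf, bwdUnion_insert_bwd hf]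
    exact Set.union_subset ht hM.1.2.2.2

end ClusterLemmas



section ChunkDisjoint

variable {H : History} {K K' : Finset Op} {w : Op}

theorem fwd_subset_of_touch (hWf : Wf H) (hCS : ChunkSet H CS)
    (hK : K ∈ CS) (hK' : K' ∈ CS)
    (ht : (fwdUnion H K ∩ fwdUnion H K').Nonempty) : K' ⊆ K := by
  have hMK := hCS.1 K hK
  have hMK' := hCS.1 K' hK'
  obtain ⟨t, htK, htK'⟩ := ht
  -- Step 1: every forward write of K' is in K.
  have step1 : ∀ w' ∈ K', ForwardZone H w' → w' ∈ K := by
    by_contra hcon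
    push_neg at hcon
    obtain ⟨w₂, hw₂K', hw₂F, hw₂K⟩ := hcon
    -- A: zones of forward writes of K' that are in K; B: those not in K.
    classical
    set SA := K'.filter (fun w' => ForwardZone H w' ∧ w' ∈ K) with hSA
    set SB := K'.filter (fun w' => ForwardZone H w' ∧ w' ∉ K) with hSB
    set A := ⋃ w' ∈ (SA : Set Op), zone H w' with hA
    set B := ⋃ w' ∈ (SB : Set Op), zone H w' with hB
    have hAcl : IsClosed A := by
      apply Set.Finite.isClosed_biUnion (SA.finite_toSet)
      intro i _; exact isClosed_Icc
    have hBcl : IsClosed B := by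
      apply Set.Finite.isClosed_biUnion (SB.finite_toSet)
      intro i _; exact isClosed_Icc
    have hcover : fwdUnion H K' ⊆ A ∪ B := by
      intro x hx
      obtain ⟨w', hw'K', hw'F, hxz⟩ := mem_fwdUnion.mp hx
      by_cases hmem : w' ∈ K
      · exact Or.inl (Set.mem_biUnion (by simp [hSA, Finset.mem_filter]; exact ⟨hw'K', hw'F, hmem⟩) hxz)
      · exact Or.inr (Set.mem_biUnion (by simp [hSB, Finset.mem_filter]; exact ⟨hw'K', hw'F, hmem⟩) hxz)
    have hAne : (fwdUnion H K' ∩ A).Nonempty := by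
      obtain ⟨w₁, hw₁K', hw₁F, htz⟩ := mem_fwdUnion.mp htK'
      have hw₁K : w₁ ∈ K :=
        mem_of_fwd_touch hMK (hMK'.1.1 w₁ hw₁K').1 (hMK'.1.1 w₁ hw₁K').2 hw₁F ⟨t, htz, htK⟩
      exact ⟨t, htK', Set.mem_biUnion (by simp [hSA, Finset.mem_filter]; exact ⟨hw₁K', hw₁F, hw₁K⟩) htz⟩
    have hBne : (fwdUnion H K' ∩ B).Nonempty := by
      refine ⟨zoneL H w₂, ?_, ?_⟩
      · exact mem_fwdUnion.mpr ⟨w₂, hw₂K', hw₂F, zoneL_mem_zone⟩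
      · exact Set.mem_biUnion (by simp [hSB, Finset.mem_filter]; exact ⟨hw₂K', hw₂F, hw₂K⟩) zoneL_mem_zone
    have hpc : IsPreconnected (fwdUnion H K') := by
      rw [(fwdUnion_Icc hMK'.1).2]; exact isPreconnected_Icc
    obtain ⟨y, _, hyA, hyB⟩ := isPreconnected_closed_iff.mp hpc A B hAcl hBcl hcover hAne hBne
    obtain ⟨w₁', hw₁', hyz1⟩ := Set.mem_iUnion₂.mp hyA
    obtain ⟨w₂', hw₂', hyz2⟩ := Set.mem_iUnion₂.mp hyB
    rw [Finset.mem_coe, hSA, Finset.mem_filter] at hw₁'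
    rw [Finset.mem_coe, hSB, Finset.mem_filter] at hw₂'
    have hy_in_K : y ∈ fwdUnion H K := mem_fwdUnion.mpr ⟨w₁', hw₁'.2.2, hw₁'.2.1, hyz1⟩
    have : w₂' ∈ K := mem_of_fwd_touch hMK (hMK'.1.1 w₂' hw₂'.1).1 (hMK'.1.1 w₂' hw₂'.1).2
      hw₂'.2.1 ⟨y, hyz2, hy_in_K⟩
    exact hw₂'.2.2 this
  -- Step 2: fwdUnion K' ⊆ fwdUnion K
  have hsub : fwdUnion H K' ⊆ fwdUnion H K := by
    intro x hx
    obtain ⟨w', hw'K', hw'F, hxz⟩ := mem_fwdUnion.mp hx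
    exact mem_fwdUnion.mpr ⟨w', step1 w' hw'K' hw'F, hw'F, hxz⟩
  -- Step 3: backward writes of K' are in K too.
  intro w' hw'K'
  by_cases hw'F : ForwardZone H w'
  · exact step1 w' hw'K' hw'F
  · refine mem_of_bwd_sub hMK (hMK'.1.1 w' hw'K').1 (hMK'.1.1 w' hw'K').2 hw'F ?_
    intro x hx
    exact hsub (hMK'.1.2.2.2 (mem_bwdUnion.mpr ⟨w', hw'K', hw'F, hx⟩))

theorem chunks_eq_of_touch (hWf : Wf H) (hCS : ChunkSet H CS)
    (hK : K ∈ CS) (hK' : K' ∈ CS)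
    (ht : (fwdUnion H K ∩ fwdUnion H K').Nonempty) : K = K' :=
  Finset.Subset.antisymm
    (fwd_subset_of_touch hWf hCS hK' hK ⟨ht.choose, ht.choose_spec.2, ht.choose_spec.1⟩)
    (fwd_subset_of_touch hWf hCS hK hK' ht)

theorem chunk_unique (hWf : Wf H) (hCS : ChunkSet H CS)
    (hK : K ∈ CS) (hK' : K' ∈ CS) (hw : w ∈ K) (hw' : w ∈ K') : K = K' := by
  apply chunks_eq_of_touch hWf hCS hK hK'
  exact ⟨zoneL H w, zone_subset_fwd (hCS.1 K hK).1 hw zoneL_mem_zone,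
    zone_subset_fwd (hCS.1 K' hK').1 hw' zoneL_mem_zone⟩

end ChunkDisjoint


section ListLemmas

theorem Before.mem_left {l a b} (h : Before l a b) : a ∈ l := by
  obtain ⟨l1, l2, l3, rfl⟩ := h; simp

theorem Before.mem_right {l a b} (h : Before l a b) : b ∈ l := by
  obtain ⟨l1, l2, l3, rfl⟩ := h; simp

theorem before_of_append {X Y : List Op} {a b : Op} (ha : a ∈ X) (hb : b ∈ Y) :
    Before (X ++ Y) a b := by
  obtain ⟨x1, x2, rfl⟩ := List.append_of_mem ha
  obtain ⟨y1, y2, rfl⟩ := List.append_of_mem hb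
  exact ⟨x1, x2 ++ y1, y2, by simp⟩

theorem Before.append_left (W : List Op) {X a b} (h : Before X a b) :
    Before (W ++ X) a b := by
  obtain ⟨l1, l2, l3, rfl⟩ := h
  exact ⟨W ++ l1, l2, l3, by simp⟩

theorem Before.append_right (Z : List Op) {X a b} (h : Before X a b) :
    Before (X ++ Z) a b := by
  obtain ⟨l1, l2, l3, rfl⟩ := h
  exact ⟨l1, l2, l3 ++ Z, by simp⟩

theorem before_cons_iff {x : Op} {L a b} :
    Before (x :: L) a b ↔ (a = x ∧ b ∈ L) ∨ Before L a b := by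
  constructor
  · rintro ⟨l1, l2, l3, h⟩
    cases l1 with
    | nil =>
      rw [List.nil_append] at h
      injection h with h1 h2
      exact Or.inl ⟨h1.symm, by rw [h2]; simp⟩
    | cons y l1' =>
      rw [List.cons_append] at h
      injection h with h1 h2
      exact Or.inr ⟨l1', l2, l3, h2⟩
  · rintro (⟨rfl, hb⟩ | h)
    · obtain ⟨y1, y2, rfl⟩ := List.append_of_mem hb
      exact ⟨[], y1, y2, by simp⟩
    · exact h.append_left [x]

theorem Before.ne_of_nodup {l a b} (hn : l.Nodup) (h : Before l a b) : a ≠ b := by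
  obtain ⟨l1, l2, l3, rfl⟩ := h
  intro heq
  subst heq
  simp [List.nodup_append] at hn

theorem before_sublist {a b : Op} {l' l : List Op} (hs : l'.Sublist l) :
    l.Nodup → a ∈ l' → b ∈ l' → Before l a b → Before l' a b := by
  induction hs with
  | slnil => exact fun _ _ _ h => h
  | cons x hsub ih =>
    intro hn ha hb h
    rcases before_cons_iff.mp h with ⟨rfl, _⟩ | h'
    · exact absurd (hsub.subset ha) (List.nodup_cons.mp hn).1
    · exact ih (List.nodup_cons.mp hn).2 ha hb h'
  | cons_cons x hsub ih =>
    intro hn ha hb h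
    have hxL := (List.nodup_cons.mp hn).1
    rcases before_cons_iff.mp h with ⟨rfl, hbL⟩ | h'
    · have hbx : b ≠ a := fun hc => hxL (hc ▸ hbL)
      have hbl := (List.mem_cons.mp hb).resolve_left hbx
      exact before_cons_iff.mpr (Or.inl ⟨rfl, hbl⟩)
    · have hax : a ≠ x := fun hc => hxL (hc ▸ h'.mem_left)
      have hbx : b ≠ x := fun hc => hxL (hc ▸ h'.mem_right)
      exact (ih (List.nodup_cons.mp hn).2 ((List.mem_cons.mp ha).resolve_left hax)
        ((List.mem_cons.mp hb).resolve_left hbx) h').append_left [x]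

theorem before_of_pairwise {α : Type*} {R : α → α → Prop} {l : List α}
    {A B : α} (hp : l.Pairwise R) (hA : A ∈ l) (hB : B ∈ l)
    (hR : ¬ R B A) (hne : A ≠ B) : ∃ l1 l2 l3, l = l1 ++ A :: l2 ++ B :: l3 := by
  obtain ⟨s, t, rfl⟩ := List.append_of_mem hA
  rcases List.mem_append.mp hB with hBs | hBt
  · exact absurd ((List.pairwise_append.mp hp).2.2 B hBs A (by simp)) hR
  · rcases List.mem_cons.mp hBt with rfl | hBt'
    · exact absurd rfl hne
    · obtain ⟨t1, t2, rfl⟩ := List.append_of_mem hBt'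
      exact ⟨s, t1, t2, by simp⟩

end ListLemmas



section Restriction

theorem katomic_subset {k : ℕ} {H H' : History} (hsub : ∀ op ∈ H', op ∈ H)
    (h : KAtomic k H) : KAtomic k H' := by
  classical
  obtain ⟨l, ⟨hnd, hmem⟩, hval, hka⟩ := h
  set p : Op → Bool := fun op => decide (op ∈ H') with hp
  have hpmem : ∀ op, op ∈ l.filter p ↔ op ∈ H' := by
    intro op
    rw [List.mem_filter]
    constructor
    · rintro ⟨_, h2⟩
      simpa [hp] using h2
    · intro h2
      exact ⟨(hmem op).mpr (hsub op h2), by simpa [hp] using h2⟩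
  refine ⟨l.filter p, ⟨hnd.filter p, hpmem⟩, ?_, ?_⟩
  · intro a ha b hb hfs
    have hB : Before l a b :=
      hval a (List.mem_of_mem_filter ha) b (List.mem_of_mem_filter hb) hfs
    exact before_sublist List.filter_sublist hnd ha hb hB
  · intro r hr hrR w hw hwW hval'
    obtain ⟨l1, l2, l3, heq, hcount⟩ :=
      hka r (List.mem_of_mem_filter hr) hrR w (List.mem_of_mem_filter hw) hwW hval'
    have hpw : p w = true := (List.mem_filter.mp hw).2
    have hpr : p r = true := (List.mem_filter.mp hr).2
    refine ⟨l1.filter p, l2.filter p, l3.filter p, ?_, ?_⟩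
    · rw [heq]
      simp [List.filter_append, List.filter_cons, hpw, hpr]
    · refine le_trans ?_ hcount
      exact List.Sublist.length_le (List.Sublist.filter _ List.filter_sublist)

end Restriction



section Flatten

theorem before_flatten_of_pieces {α : Type*} (g : α → List Op) {LP : List α} {A B : α}
    {s1 s2 s3 : List α} (heq : LP = s1 ++ A :: s2 ++ B :: s3) {a b : Op}
    (ha : a ∈ g A) (hb : b ∈ g B) : Before ((LP.map g).flatten) a b := by
  have h2 : (LP.map g).flatten
      = ((s1.map g).flatten ++ g A) ++ ((s2.map g).flatten ++ (g B ++ (s3.map g).flatten)) := by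
    subst heq; simp
  rw [h2]
  exact before_of_append (by simp [ha]) (by simp [hb])

theorem before_flatten_of_piece {α : Type*} (g : α → List Op) {LP : List α} {A : α}
    {s1 s2 : List α} (heq : LP = s1 ++ A :: s2) {a b : Op}
    (h : Before (g A) a b) : Before ((LP.map g).flatten) a b := by
  obtain ⟨l1, l2, l3, hA⟩ := h
  refine ⟨(s1.map g).flatten ++ l1, l2, l3 ++ (s2.map g).flatten, ?_⟩
  subst heq; simp [hA]

theorem flatten_decomp {α : Type*} (g : α → List Op) {LP : List α} {A : α}
    {s1 s2 : List α} (heq : LP = s1 ++ A :: s2) {w r : Op} {l1 l2 l3 : List Op}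
    (hA : g A = l1 ++ w :: l2 ++ r :: l3) :
    (LP.map g).flatten
      = ((s1.map g).flatten ++ l1) ++ w :: l2 ++ r :: (l3 ++ (s2.map g).flatten) := by
  subst heq; simp [hA]

theorem mem_flatten_map {α : Type*} (g : α → List Op) {LP : List α} {op : Op} :
    op ∈ (LP.map g).flatten ↔ ∃ A ∈ LP, op ∈ g A := by
  simp [List.mem_flatten]

end Flatten

theorem katomic_of_chunks (H : History) (hWf : Wf H) (CS : Finset (Finset Op))
    (hCS : ChunkSet H CS) (h2 : ∀ K ∈ CS, KAtomic 2 (proj H K)) : KAtomic 2 H := by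
  classical
  choose L hL using h2
  set g : Finset Op → List Op := fun A => if h : A ∈ CS then L A h else A.toList with hg
  have hgCS : ∀ (A) (h : A ∈ CS), g A = L A h := by
    intro A h; simp only [hg]; exact dif_pos h
  have hgmem : ∀ (A) (h : A ∈ CS), ∀ op, op ∈ g A ↔ op ∈ proj H A := by
    intro A h op; rw [hgCS A h]; exact (hL A h).1.2 op
  set U : Finset Op := H.filter (fun u => u.isRead = false ∧ ∀ K ∈ CS, u ∉ K) with hU
  have hUelim : ∀ u ∈ U, u ∈ H ∧ u.isRead = false ∧ ∀ K ∈ CS, u ∉ K := by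
    intro u hu
    have h3 := Finset.mem_filter.mp hu
    exact ⟨h3.1, h3.2.1, h3.2.2⟩
  have hUnotCS : ∀ u ∈ U, ({u} : Finset Op) ∉ CS := by
    intro u hu hc
    exact (hUelim u hu).2.2 _ hc (Finset.mem_singleton_self u)
  have hgU : ∀ u ∈ U, g {u} = [u] := by
    intro u hu
    simp only [hg]
    rw [dif_neg (hUnotCS u hu)]
    exact Finset.toList_singleton u
  have hUnotproj : ∀ u ∈ U, ∀ K ∈ CS, u ∉ proj H K := by
    intro u hu K hK hmem
    obtain ⟨-, w, hwK, hcl⟩ := Finset.mem_filter.mp hmem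
    have huw : u = w := write_eq_of_mem_cluster (hUelim u hu).2.1 hcl
    exact (hUelim u hu).2.2 K hK (huw ▸ hwK)
  have hUback : ∀ u ∈ U, ¬ ForwardZone H u := by
    intro u hu hf
    obtain ⟨K, hK, huK⟩ := hCS.2 u (hUelim u hu).1 (hUelim u hu).2.1 hf
    exact (hUelim u hu).2.2 K hK huK
  set P : Finset (Finset Op) := CS ∪ U.image (fun u => ({u} : Finset Op)) with hP
  have hPcase : ∀ A ∈ P, A ∈ CS ∨ ∃ u ∈ U, A = {u} := by
    intro A hA
    rcases Finset.mem_union.mp hA with h | h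
    · exact Or.inl h
    · obtain ⟨u, hu, rfl⟩ := Finset.mem_image.mp h
      exact Or.inr ⟨u, hu, rfl⟩
  set pos : Finset Op → ℝ := fun A => if A ∈ CS then iA H A else sInf (Op.s '' (A : Set Op))
    with hpos
  have hposK : ∀ K ∈ CS, pos K = iA H K := by
    intro K hK; simp only [hpos]; rw [if_pos hK]
  have hposU : ∀ u ∈ U, pos {u} = u.s := by
    intro u hu
    simp only [hpos]
    rw [if_neg (hUnotCS u hu), Finset.coe_singleton, Set.image_singleton, csInf_singleton]
  set LP : List (Finset Op) :=
    P.toList.mergeSort (fun A B => decide (pos A ≤ pos B)) with hLP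
  have hLPmem : ∀ A, A ∈ LP ↔ A ∈ P := by
    intro A; rw [hLP, List.mem_mergeSort, Finset.mem_toList]
  have hLPnd : LP.Nodup := by
    rw [hLP]
    exact ((List.mergeSort_perm _ _).nodup_iff).mpr P.nodup_toList
  have hLPsorted : LP.Pairwise (fun A B => pos A ≤ pos B) := by
    have hs := List.pairwise_mergeSort (le := fun A B => decide (pos A ≤ pos B))
      (fun a b c h1 h2 => by simp only [decide_eq_true_eq] at *; exact le_trans h1 h2)
      (fun a b => by simpa using le_total (pos a) (pos b)) P.toList
    rw [hLP]
    exact hs.imp (by intro a b h; simpa using h)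
  set l : List Op := (LP.map g).flatten with hl
  have hmem_l : ∀ op, op ∈ l ↔ ∃ A ∈ LP, op ∈ g A := fun op => mem_flatten_map g
  have hbound : ∀ K ∈ CS, ∀ op ∈ proj H K, iA H K ≤ op.f ∧ op.s ≤ iB H K := by
    intro K hK op hop
    obtain ⟨-, w, hwK, hcl⟩ := Finset.mem_filter.mp hop
    exact ops_bound (hCS.1 K hK).1 hwK hcl
  have hchunk_disj : ∀ K ∈ CS, ∀ K' ∈ CS, K ≠ K' →
      iB H K < iA H K' ∨ iB H K' < iA H K := by
    intro K hK K' hK' hne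
    by_contra hcon
    push_neg at hcon
    obtain ⟨h1, h1'⟩ := hcon
    apply hne
    apply chunks_eq_of_touch hWf hCS hK hK'
    refine ⟨max (iA H K) (iA H K'), ?_, ?_⟩
    · rw [(fwdUnion_Icc (hCS.1 K hK).1).2]
      exact ⟨le_max_left _ _, max_le (fwdUnion_Icc (hCS.1 K hK).1).1 h1⟩
    · rw [(fwdUnion_Icc (hCS.1 K' hK').1).2]
      exact ⟨le_max_right _ _, max_le h1' (fwdUnion_Icc (hCS.1 K' hK').1).1⟩
  have huK : ∀ u ∈ U, ∀ K ∈ CS, ∀ b ∈ proj H K, u.f < b.s → u.s < iA H K := by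
    intro u hu K hK b hb hfb
    by_contra hcon
    push_neg at hcon
    have huH := (hUelim u hu).1
    have huW : u.isWrite := (hUelim u hu).2.1
    have hzone : zone H u = Set.Icc u.s u.f := zone_backward hWf huH huW (hUback u hu)
    have hsub : zone H u ⊆ fwdUnion H K := by
      rw [hzone, (fwdUnion_Icc (hCS.1 K hK).1).2]
      apply Set.Icc_subset_Icc hcon
      exact le_trans (le_of_lt hfb) (hbound K hK b hb).2
    exact (hUelim u hu).2.2 K hK
      (mem_of_bwd_sub (hCS.1 K hK) huH huW (hUback u hu) hsub)
  -- cross-piece ordering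
  have hcross : ∀ A ∈ P, ∀ B ∈ P, A ≠ B → ∀ a ∈ g A, ∀ b ∈ g B,
      a.f < b.s → pos A < pos B := by
    intro A hAP B hBP hAB a haA b hbB hfs
    rcases hPcase A hAP with hA | ⟨u, hu, rfl⟩
    · have haProj : a ∈ proj H A := (hgmem A hA a).mp haA
      rcases hPcase B hBP with hB | ⟨v, hv, rfl⟩
      · rw [hposK A hA, hposK B hB]
        rcases hchunk_disj A hA B hB hAB with h | h
        · exact lt_of_le_of_lt (fwdUnion_Icc (hCS.1 A hA).1).1 h
        · exfalso
          have hbProj : b ∈ proj H B := (hgmem B hB b).mp hbB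
          have : b.s < a.f :=
            lt_of_le_of_lt (hbound B hB b hbProj).2 (lt_of_lt_of_le h (hbound A hA a haProj).1)
          exact absurd hfs (not_lt.mpr (le_of_lt this))
      · have hbv : b = v := by
          rw [hgU v hv] at hbB; simpa using hbB
        rw [hposK A hA, hposU v hv]
        subst hbv
        -- iA ≤ a.f < b.s
        exact lt_of_le_of_lt (hbound A hA a haProj).1 hfs
    · have hau : a = u := by
        rw [hgU u hu] at haA; simpa using haA
      rw [hau] at hfs
      rcases hPcase B hBP with hB | ⟨v, hv, rfl⟩
      · have hbProj : b ∈ proj H B := (hgmem B hB b).mp hbB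
        rw [hposU u hu, hposK B hB]
        exact huK u hu B hB b hbProj hfs
      · have hbv : b = v := by
          rw [hgU v hv] at hbB; simpa using hbB
        rw [hbv] at hfs
        rw [hposU u hu, hposU v hv]
        exact lt_trans (hWf.1 u (hUelim u hu).1) hfs
  -- disjointness of pieces
  have hdisj : ∀ A ∈ P, ∀ B ∈ P, A ≠ B → ∀ op, op ∈ g A → op ∈ g B → False := by
    intro A hAP B hBP hAB op hopA hopB
    rcases hPcase A hAP with hA | ⟨u, hu, rfl⟩
    · have hopA' : op ∈ proj H A := (hgmem A hA op).mp hopA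
      obtain ⟨hopH, w, hwA, hcl⟩ := Finset.mem_filter.mp hopA'
      rcases hPcase B hBP with hB | ⟨v, hv, rfl⟩
      · have hopB' : op ∈ proj H B := (hgmem B hB op).mp hopB
        obtain ⟨-, w', hw'B, hcl'⟩ := Finset.mem_filter.mp hopB'
        have hww' : w = w' := by
          by_cases hR : op.isRead = true
          · have hne : op ≠ w := by
              intro hc
              have := (hCS.1 A hA).1.1 w hwA
              rw [← hc, Op.isWrite, hR] at this
              exact absurd this.2 (by simp)
            have hne' : op ≠ w' := by
              intro hc
              have := (hCS.1 B hB).1.1 w' hw'B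
              rw [← hc, Op.isWrite, hR] at this
              exact absurd this.2 (by simp)
            have h1 := (read_of_mem_cluster hcl hne).2.2
            have h1' := (read_of_mem_cluster hcl' hne').2.2
            exact hWf.2.2.1 w ((hCS.1 A hA).1.1 w hwA).1 w' ((hCS.1 B hB).1.1 w' hw'B).1
              ((hCS.1 A hA).1.1 w hwA).2 ((hCS.1 B hB).1.1 w' hw'B).2 (h1 ▸ h1' ▸ rfl)
          · have hWop : op.isWrite := by
              rw [Op.isWrite]; cases hq : op.isRead; rfl; exact absurd hq hR
            rw [← write_eq_of_mem_cluster hWop hcl, ← write_eq_of_mem_cluster hWop hcl']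
        exact hAB (chunk_unique hWf hCS hA hB hwA (hww' ▸ hw'B))
      · have hopv : op = v := by rw [hgU v hv] at hopB; simpa using hopB
        exact hUnotproj v hv A hA (hopv ▸ hopA')
    · have hopu : op = u := by rw [hgU u hu] at hopA; simpa using hopA
      rcases hPcase B hBP with hB | ⟨v, hv, rfl⟩
      · have hopB' : op ∈ proj H B := (hgmem B hB op).mp hopB
        exact hUnotproj u hu B hB (hopu ▸ hopB')
      · have hopv : op = v := by rw [hgU v hv] at hopB; simpa using hopB
        exact hAB (by rw [← hopu, hopv])
  -- coverage
  have hcover : ∀ op ∈ H, ∃ A ∈ LP, op ∈ g A := by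
    intro op hop
    by_cases hR : op.isRead = true
    · obtain ⟨w, hwH, hwW, hwv, hwf⟩ := hWf.2.2.2 op hop hR
      have hcl : op ∈ cluster H w :=
        Finset.mem_insert.mpr (Or.inr (Finset.mem_filter.mpr ⟨hop, hR, hwv.symm⟩))
      have hne : op ≠ w := by
        intro hc
        rw [← hc, Op.isWrite, hR] at hwW
        exact absurd hwW (by simp)
      have hfwd : ForwardZone H w := forward_of_read hWf hwH hwW hcl hne
      obtain ⟨K, hK, hwK⟩ := hCS.2 w hwH hwW hfwd
      refine ⟨K, (hLPmem K).mpr (Finset.mem_union_left _ hK), ?_⟩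
      rw [hgmem K hK op]
      exact Finset.mem_filter.mpr ⟨hop, w, hwK, hcl⟩
    · by_cases hC : ∃ K ∈ CS, op ∈ K
      · obtain ⟨K, hK, hopK⟩ := hC
        refine ⟨K, (hLPmem K).mpr (Finset.mem_union_left _ hK), ?_⟩
        rw [hgmem K hK op]
        exact Finset.mem_filter.mpr ⟨hop, op, hopK, mem_cluster_self H op⟩
      · push_neg at hC
        have hu : op ∈ U := Finset.mem_filter.mpr ⟨hop, by simpa using hR, hC⟩
        refine ⟨{op}, (hLPmem _).mpr (Finset.mem_union_right _
          (Finset.mem_image.mpr ⟨op, hu, rfl⟩)), ?_⟩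
        rw [hgU op hu]
        simp
  have hgsub : ∀ A ∈ P, ∀ op ∈ g A, op ∈ H := by
    intro A hAP op hop
    rcases hPcase A hAP with hA | ⟨u, hu, rfl⟩
    · exact Finset.mem_of_mem_filter op ((hgmem A hA op).mp hop)
    · have : op = u := by rw [hgU u hu] at hop; simpa using hop
      exact this ▸ (hUelim u hu).1
  have hmemH : ∀ op, op ∈ l ↔ op ∈ H := by
    intro op
    rw [hmem_l op]
    constructor
    · rintro ⟨A, hALP, hopA⟩
      exact hgsub A ((hLPmem A).mp hALP) op hopA
    · intro hop
      exact hcover op hop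
  have hnodup : l.Nodup := by
    rw [hl, List.nodup_flatten]
    constructor
    · intro x hx
      obtain ⟨A, hALP, rfl⟩ := List.mem_map.mp hx
      rcases hPcase A ((hLPmem A).mp hALP) with hA | ⟨u, hu, rfl⟩
      · rw [hgCS A hA]; exact (hL A hA).1.1
      · rw [hgU u hu]; exact List.nodup_singleton u
    · rw [List.pairwise_map]
      refine List.Pairwise.imp_of_mem ?_ hLPnd
      intro A B hALP hBLP hne op hopA hopB
      exact hdisj A ((hLPmem A).mp hALP) B ((hLPmem B).mp hBLP) hne op hopA hopB
  -- validity
  have hvalid : Valid l := by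
    intro a ha b hb hfs
    obtain ⟨A, hALP, haA⟩ := (hmem_l a).mp ha
    obtain ⟨B, hBLP, hbB⟩ := (hmem_l b).mp hb
    by_cases hAB : A = B
    · subst hAB
      obtain ⟨s1, s2, heq⟩ := List.append_of_mem hALP
      rcases hPcase A ((hLPmem A).mp hALP) with hA | ⟨u, hu, rfl⟩
      · have hB : Before (g A) a b := by
          rw [hgCS A hA] at haA hbB ⊢
          exact (hL A hA).2.1 a haA b hbB hfs
        exact before_flatten_of_piece g heq hB
      · exfalso
        have hau : a = u := by rw [hgU u hu] at haA; simpa using haA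
        have hbu : b = u := by rw [hgU u hu] at hbB; simpa using hbB
        rw [hau, hbu] at hfs
        exact absurd hfs (not_lt.mpr (le_of_lt (hWf.1 u (hUelim u hu).1)))
    · have hposlt := hcross A ((hLPmem A).mp hALP) B ((hLPmem B).mp hBLP) hAB a haA b hbB hfs
      obtain ⟨s1, s2, s3, heq⟩ :=
        before_of_pairwise hLPsorted hALP hBLP (not_le.mpr hposlt) hAB
      exact before_flatten_of_pieces g heq haA hbB
  -- 2-atomic order
  have hka : KAtomicOrder 2 l := by
    intro r hr hrR w hw hwW hvv
    obtain ⟨A, hALP, hrA⟩ := (hmem_l r).mp hr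
    rcases hPcase A ((hLPmem A).mp hALP) with hA | ⟨u, hu, rfl⟩
    · have hrProj : r ∈ proj H A := (hgmem A hA r).mp hrA
      obtain ⟨hrH, w₂, hw₂A, hrcl⟩ := Finset.mem_filter.mp hrProj
      have hw₂ := (hCS.1 A hA).1.1 w₂ hw₂A
      have hrne : r ≠ w₂ := by
        intro hc
        rw [← hc, Op.isWrite, hrR] at hw₂
        exact absurd hw₂.2 (by simp)
      have hval2 : r.val = w₂.val := (read_of_mem_cluster hrcl hrne).2.2
      have hwH : w ∈ H := (hmemH w).mp hw
      have hww₂ : w = w₂ := hWf.2.2.1 w hwH w₂ hw₂.1 hwW hw₂.2 (by rw [hvv, hval2])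
      have hwProj : w ∈ proj H A := by
        subst hww₂
        exact Finset.mem_filter.mpr ⟨hw₂.1, w, hw₂A, mem_cluster_self H w⟩
      obtain ⟨l1, l2, l3, heqA, hcnt⟩ :=
        (hL A hA).2.2 r (((hL A hA).1.2 r).mpr hrProj) hrR w
          (((hL A hA).1.2 w).mpr hwProj) hwW hvv
      obtain ⟨s1, s2, heq⟩ := List.append_of_mem hALP
      refine ⟨(s1.map g).flatten ++ l1, l2, l3 ++ (s2.map g).flatten, ?_, hcnt⟩
      rw [hl]
      exact flatten_decomp g heq (by rw [hgCS A hA]; exact heqA)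
    · exfalso
      have hru : r = u := by rw [hgU u hu] at hrA; simpa using hrA
      rw [hru] at hrR
      rw [(hUelim u hu).2.1] at hrR
      exact absurd hrR (by simp)
  exact ⟨l, ⟨hnodup, hmemH⟩, hvalid, hka⟩


/-- A history `H` is 2-atomic iff for every maximal chunk `K` in the chunk set,
the projection `H|K` is 2-atomic. -/
theorem stmt_3 (H : History) (hWf : Wf H) (CS : Finset (Finset Op))
    (hCS : ChunkSet H CS) :
    KAtomic 2 H ↔ ∀ K ∈ CS, KAtomic 2 (proj H K) := by
  constructor
  · intro h K hK
    exact katomic_subset (fun op hop => Finset.mem_of_mem_filter op hop) h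
  · exact katomic_of_chunks H hWf CS hCS
end
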